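/- arXiv:2302.11312 — 9 statements merged into one kernel-verified Lean document; each statement's English description precedes it below -/
import Mathlib

section
/- (Performance Difference Theorem, Theorem 1, finite discounted form.) For any two policies π and π', the performance difference satisfies J(π') − J(π) = Σ_s ρ_{π'}(s) · Σ_a π'(a|s) · A_π(s,a). -/
open Finset

/-- Performance Difference Theorem (Kakade & Langford), finite discounted form:
`J(π') − J(π) = Σ_s ρ_{π'}(s) · Σ_a π'(a|s) · A_π(s,a)`. -/
theorem performance_difference
    {S A : Type*} [Fintype S] [Fintype A] [Nonempty S] [Nonempty A]
    -- transition kernel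
    (p : S → A → S → ℝ)
    (hp0 : ∀ s a s', 0 ≤ p s a s') (hp1 : ∀ s a, ∑ s', p s a s' = 1)
    -- discount factor
    (γ : ℝ) (hγ0 : 0 ≤ γ) (hγ1 : γ < 1)
    -- initial state distribution
    (d0 : S → ℝ) (hd00 : ∀ s, 0 ≤ d0 s) (hd01 : ∑ s, d0 s = 1)
    -- reward function
    (r : S → A → ℝ)
    -- the two policies
    (π π' : S → A → ℝ)
    (hπ0 : ∀ s a, 0 ≤ π s a) (hπ1 : ∀ s, ∑ a, π s a = 1)
    (hπ'0 : ∀ s a, 0 ≤ π' s a) (hπ'1 : ∀ s, ∑ a, π' s a = 1)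
    -- value functions of π and π' (Bellman equations)
    (V V' : S → ℝ)
    (hV : ∀ s, V s = ∑ a, π s a * (r s a + γ * ∑ s', p s a s' * V s'))
    (hV' : ∀ s, V' s = ∑ a, π' s a * (r s a + γ * ∑ s', p s a s' * V' s'))
    -- discounted visitation frequency of π'
    (ρ' : S → ℝ)
    (hρ' : ∀ s', ρ' s' = d0 s' + γ * ∑ s, ρ' s * (∑ a, π' s a * p s a s')) :
    (∑ s, d0 s * V' s) - (∑ s, d0 s * V s)
      = ∑ s, ρ' s * ∑ a, π' s a * ((r s a + γ * ∑ s', p s a s' * V s') - V s) := by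
  set W : S → ℝ := fun s => V' s - V s with hW
  have key : ∀ f : S → ℝ, ∑ s, ρ' s * f s
      = ∑ s, d0 s * f s + γ * ∑ s, ρ' s * ∑ a, π' s a * ∑ s', p s a s' * f s' := by
    intro f
    calc ∑ s, ρ' s * f s
        = ∑ s', (d0 s' + γ * ∑ s, ρ' s * (∑ a, π' s a * p s a s')) * f s' := by
          exact Finset.sum_congr rfl fun s' _ => by rw [hρ' s']
      _ = ∑ s, d0 s * f s + γ * ∑ s, ρ' s * ∑ a, π' s a * ∑ s', p s a s' * f s' := by
          simp only [add_mul, Finset.sum_add_distrib, Finset.sum_mul, Finset.mul_sum, mul_assoc]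
          congr 1
          rw [Finset.sum_comm]
          exact Finset.sum_congr rfl fun s _ => Finset.sum_comm
  have hstep : ∀ s, ∑ a, π' s a * ((r s a + γ * ∑ s', p s a s' * V s') - V s)
      = W s - γ * ∑ a, π' s a * ∑ s', p s a s' * W s' := by
    intro s
    have h1 : ∑ a, π' s a * V s = V s := by
      rw [← Finset.sum_mul, hπ'1, one_mul]
    have h2 : ∀ a, (r s a + γ * ∑ s', p s a s' * V s')
        = (r s a + γ * ∑ s', p s a s' * V' s') - γ * ∑ s', p s a s' * W s' := by
      intro a
      simp only [hW, mul_sub, Finset.sum_sub_distrib]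
      ring
    simp_rw [mul_sub, Finset.sum_sub_distrib, h1, h2]
    simp_rw [mul_sub, Finset.sum_sub_distrib]
    rw [← hV' s]
    have hAB : ∑ a, π' s a * (γ * ∑ s', p s a s' * W s')
        = ∑ a, γ * (π' s a * ∑ s', p s a s' * W s') :=
      Finset.sum_congr rfl fun a _ => by ring
    rw [hW]
    rw [Finset.mul_sum, hAB]
    ring
  calc (∑ s, d0 s * V' s) - (∑ s, d0 s * V s)
      = ∑ s, d0 s * W s := by simp_rw [hW, mul_sub, Finset.sum_sub_distrib]
    _ = ∑ s, ρ' s * W s - γ * ∑ s, ρ' s * ∑ a, π' s a * ∑ s', p s a s' * W s' := by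
        rw [key W]; ring
    _ = ∑ s, ρ' s * (W s - γ * ∑ a, π' s a * ∑ s', p s a s' * W s') := by
        simp_rw [mul_sub, Finset.sum_sub_distrib, Finset.mul_sum]
        congr 1
        exact Finset.sum_congr rfl fun s _ => Finset.sum_congr rfl fun a _ =>
          Finset.sum_congr rfl fun s' _ => by ring
    _ = ∑ s, ρ' s * ∑ a, π' s a * ((r s a + γ * ∑ s', p s a s' * V s') - V s) := by
        simp_rw [hstep]
end

section
/- (Lemma 1, bound on the π-expected advantage of π̂_β.) For any two policies π and π̂_β and every state s, the quantity Ā_{π,π̂_β}(s) := Σ_a π(a|s) A_{π̂_β}(s,a) satisfies |Ā_{π,π̂_β}(s)| ≤ 2 · (max_a |A_{π̂_β}(s,a)|) · D_TV(π‖π̂_β)[s]. -/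
open Finset

/-- Lemma 1: for any two policies `π`, `π̂_β` and every state `s`,
`|Σ_a π(a|s) A_{π̂β}(s,a)| ≤ 2 · max_a |A_{π̂β}(s,a)| · D_TV(π‖π̂β)[s]`. -/
theorem expected_advantage_bound
    {S A : Type*} [Fintype S] [Fintype A] [Nonempty S] [Nonempty A]
    -- transition kernel
    (p : S → A → S → ℝ)
    (hp0 : ∀ s a s', 0 ≤ p s a s') (hp1 : ∀ s a, ∑ s', p s a s' = 1)
    -- discount factor
    (γ : ℝ) (hγ0 : 0 ≤ γ) (hγ1 : γ < 1)
    -- reward function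
    (r : S → A → ℝ)
    -- the two policies
    (π πβ : S → A → ℝ)
    (hπ0 : ∀ s a, 0 ≤ π s a) (hπ1 : ∀ s, ∑ a, π s a = 1)
    (hπβ0 : ∀ s a, 0 ≤ πβ s a) (hπβ1 : ∀ s, ∑ a, πβ s a = 1)
    -- value function of π̂β (Bellman equation)
    (Vβ : S → ℝ)
    (hVβ : ∀ s, Vβ s = ∑ a, πβ s a * (r s a + γ * ∑ s', p s a s' * Vβ s'))
    (s : S) :
    |∑ a, π s a * ((r s a + γ * ∑ s', p s a s' * Vβ s') - Vβ s)|
      ≤ 2 * (univ.sup' univ_nonempty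
              fun a => |(r s a + γ * ∑ s', p s a s' * Vβ s') - Vβ s|)
          * ((1 / 2) * ∑ a, |π s a - πβ s a|) := by
  set Adv : A → ℝ := fun a => (r s a + γ * ∑ s', p s a s' * Vβ s') - Vβ s with hAdv
  set M : ℝ := univ.sup' univ_nonempty fun a => |Adv a| with hM
  have hβzero : ∑ a, πβ s a * Adv a = 0 := by
    have : ∑ a, πβ s a * Adv a
        = (∑ a, πβ s a * (r s a + γ * ∑ s', p s a s' * Vβ s')) - (∑ a, πβ s a) * Vβ s := by
      rw [sum_mul]
      rw [← sum_sub_distrib]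
      apply sum_congr rfl
      intro a _
      ring
    rw [this, hπβ1, ← hVβ]
    ring
  have hrw : ∑ a, π s a * Adv a = ∑ a, (π s a - πβ s a) * Adv a := by
    rw [← sub_eq_zero]
    rw [← sum_sub_distrib]
    rw [← hβzero]
    apply sum_congr rfl
    intro a _
    ring
  have hMle : ∀ a : A, |Adv a| ≤ M := fun a => le_sup' (fun a => |Adv a|) (mem_univ a)
  calc |∑ a, π s a * Adv a| = |∑ a, (π s a - πβ s a) * Adv a| := by rw [hrw]
    _ ≤ ∑ a, |(π s a - πβ s a) * Adv a| := abs_sum_le_sum_abs _ _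
    _ ≤ ∑ a, |π s a - πβ s a| * M := by
        apply sum_le_sum
        intro a _
        rw [abs_mul]
        exact mul_le_mul_of_nonneg_left (hMle a) (abs_nonneg _)
    _ = 2 * M * ((1 / 2) * ∑ a, |π s a - πβ s a|) := by
        rw [← sum_mul]; ring
end

section
/- (Lemma 2, ℓ¹ bound on the difference of discounted visitation frequencies.) For any two policies π and π', the discounted visitation frequencies satisfy Σ_s |ρ_π(s) − ρ_{π'}(s)| ≤ (2γ/(1−γ)) · Σ_s ρ_{π'}(s) · D_TV(π‖π')[s]. -/
open Finset

/-- Lemma 2 (Achiam et al.): ℓ¹ bound on the difference of discounted visitation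
frequencies: `Σ_s |ρ_π(s) − ρ_{π'}(s)| ≤ (2γ/(1−γ)) · Σ_s ρ_{π'}(s) · D_TV(π‖π')[s]`. -/
theorem visitation_difference_bound
    {S A : Type*} [Fintype S] [Fintype A] [Nonempty S] [Nonempty A]
    -- transition kernel
    (p : S → A → S → ℝ)
    (hp0 : ∀ s a s', 0 ≤ p s a s') (hp1 : ∀ s a, ∑ s', p s a s' = 1)
    -- discount factor
    (γ : ℝ) (hγ0 : 0 ≤ γ) (hγ1 : γ < 1)
    -- initial state distribution
    (d0 : S → ℝ) (hd00 : ∀ s, 0 ≤ d0 s) (hd01 : ∑ s, d0 s = 1)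
    -- the two policies
    (π π' : S → A → ℝ)
    (hπ0 : ∀ s a, 0 ≤ π s a) (hπ1 : ∀ s, ∑ a, π s a = 1)
    (hπ'0 : ∀ s a, 0 ≤ π' s a) (hπ'1 : ∀ s, ∑ a, π' s a = 1)
    -- discounted visitation frequencies of π and π'
    (ρ ρ' : S → ℝ)
    (hρ : ∀ s', ρ s' = d0 s' + γ * ∑ s, ρ s * (∑ a, π s a * p s a s'))
    (hρ' : ∀ s', ρ' s' = d0 s' + γ * ∑ s, ρ' s * (∑ a, π' s a * p s a s')) :
    ∑ s, |ρ s - ρ' s|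
      ≤ (2 * γ / (1 - γ)) * ∑ s, ρ' s * ((1 / 2) * ∑ a, |π s a - π' s a|) := by
  have h1γ : (0:ℝ) < 1 - γ := by linarith
  set P : S → S → ℝ := fun s s' => ∑ a, π s a * p s a s' with hP
  set P' : S → S → ℝ := fun s s' => ∑ a, π' s a * p s a s' with hP'
  have hPnn : ∀ s s', 0 ≤ P s s' := fun s s' =>
    Finset.sum_nonneg fun a _ => mul_nonneg (hπ0 s a) (hp0 s a s')
  have hP'nn : ∀ s s', 0 ≤ P' s s' := fun s s' =>
    Finset.sum_nonneg fun a _ => mul_nonneg (hπ'0 s a) (hp0 s a s')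
  have hProw : ∀ s, ∑ s', P s s' = 1 := by
    intro s
    simp only [hP]
    rw [Finset.sum_comm]
    simp_rw [← Finset.mul_sum, hp1, mul_one]
    exact hπ1 s
  have hP'row : ∀ s, ∑ s', P' s s' = 1 := by
    intro s
    simp only [hP']
    rw [Finset.sum_comm]
    simp_rw [← Finset.mul_sum, hp1, mul_one]
    exact hπ'1 s
  -- nonnegativity of ρ'
  have key : ∑ s', max (-(ρ' s')) 0 ≤ γ * ∑ s, max (-(ρ' s)) 0 := by
    have step : ∀ s', max (-(ρ' s')) 0 ≤ γ * ∑ s, max (-(ρ' s)) 0 * P' s s' := by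
      intro s'
      have h0 : 0 ≤ γ * ∑ s, max (-(ρ' s)) 0 * P' s s' :=
        mul_nonneg hγ0 (Finset.sum_nonneg fun s _ =>
          mul_nonneg (le_max_right _ _) (hP'nn s s'))
      have h1 : -(ρ' s') ≤ γ * ∑ s, max (-(ρ' s)) 0 * P' s s' := by
        rw [hρ' s']
        have hsum : ∑ s, ρ' s * P' s s' ≥ ∑ s, (-(max (-(ρ' s)) 0)) * P' s s' := by
          apply Finset.sum_le_sum
          intro s _
          have : -(max (-(ρ' s)) 0) ≤ ρ' s := by
            have := le_max_left (-(ρ' s)) 0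
            linarith
          exact mul_le_mul_of_nonneg_right this (hP'nn s s')
        have hd := hd00 s'
        have : ∑ s, (-(max (-(ρ' s)) 0)) * P' s s'
            = -∑ s, max (-(ρ' s)) 0 * P' s s' := by
          rw [← Finset.sum_neg_distrib]
          congr 1; funext s; ring
        rw [this] at hsum
        nlinarith
      exact max_le h1 h0
    calc ∑ s', max (-(ρ' s')) 0
        ≤ ∑ s', γ * ∑ s, max (-(ρ' s)) 0 * P' s s' :=
          Finset.sum_le_sum fun s' _ => step s'
      _ = γ * ∑ s, max (-(ρ' s)) 0 := by
          rw [← Finset.mul_sum, Finset.sum_comm]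
          simp_rw [← Finset.mul_sum, hP'row, mul_one]
  have hsumnn : 0 ≤ ∑ s, max (-(ρ' s)) 0 :=
    Finset.sum_nonneg fun s _ => le_max_right _ _
  have hsum0 : ∑ s, max (-(ρ' s)) 0 = 0 := by nlinarith
  have hρ'nn : ∀ s, 0 ≤ ρ' s := by
    intro s
    have h := (Finset.sum_eq_zero_iff_of_nonneg
      (fun s _ => le_max_right (-(ρ' s)) 0)).mp hsum0 s (Finset.mem_univ s)
    have := le_max_left (-(ρ' s)) 0
    rw [h] at this
    linarith
  -- TV bound on transition rows
  have hTV : ∀ s, ∑ s', |P s s' - P' s s'| ≤ ∑ a, |π s a - π' s a| := by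
    intro s
    have e1 : ∀ s', P s s' - P' s s' = ∑ a, (π s a - π' s a) * p s a s' := by
      intro s'
      simp only [hP, hP', ← Finset.sum_sub_distrib]
      congr 1; funext a; ring
    calc ∑ s', |P s s' - P' s s'|
        ≤ ∑ s', ∑ a, |(π s a - π' s a) * p s a s'| := by
          apply Finset.sum_le_sum
          intro s' _
          rw [e1 s']
          exact Finset.abs_sum_le_sum_abs _ _
      _ = ∑ a, |π s a - π' s a| * ∑ s', p s a s' := by
          rw [Finset.sum_comm]
          congr 1; funext a
          rw [Finset.mul_sum]
          congr 1; funext s'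
          rw [abs_mul, abs_of_nonneg (hp0 s a s')]
      _ = ∑ a, |π s a - π' s a| := by simp [hp1]
  -- per-state bound
  have step : ∀ s', |ρ s' - ρ' s'|
      ≤ γ * (∑ s, |ρ s - ρ' s| * P s s' + ∑ s, ρ' s * |P s s' - P' s s'|) := by
    intro s'
    have e : ρ s' - ρ' s'
        = γ * ∑ s, ((ρ s - ρ' s) * P s s' + ρ' s * (P s s' - P' s s')) := by
      rw [hρ s', hρ' s']
      have : ∑ s, ((ρ s - ρ' s) * P s s' + ρ' s * (P s s' - P' s s'))
          = ∑ s, ρ s * P s s' - ∑ s, ρ' s * P' s s' := by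
        rw [← Finset.sum_sub_distrib]
        congr 1; funext s; ring
      rw [this]; ring
    rw [e, abs_mul, abs_of_nonneg hγ0]
    apply mul_le_mul_of_nonneg_left _ hγ0
    calc |∑ s, ((ρ s - ρ' s) * P s s' + ρ' s * (P s s' - P' s s'))|
        ≤ ∑ s, |(ρ s - ρ' s) * P s s' + ρ' s * (P s s' - P' s s')| :=
          Finset.abs_sum_le_sum_abs _ _
      _ ≤ ∑ s, (|ρ s - ρ' s| * P s s' + ρ' s * |P s s' - P' s s'|) := by
          apply Finset.sum_le_sum
          intro s _
          calc |(ρ s - ρ' s) * P s s' + ρ' s * (P s s' - P' s s')|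
              ≤ |(ρ s - ρ' s) * P s s'| + |ρ' s * (P s s' - P' s s')| :=
                abs_add_le _ _
            _ = |ρ s - ρ' s| * P s s' + ρ' s * |P s s' - P' s s'| := by
                rw [abs_mul, abs_of_nonneg (hPnn s s'), abs_mul,
                  abs_of_nonneg (hρ'nn s)]
      _ = ∑ s, |ρ s - ρ' s| * P s s' + ∑ s, ρ' s * |P s s' - P' s s'| :=
          Finset.sum_add_distrib
  set D := ∑ s, |ρ s - ρ' s| with hD
  set K := ∑ s, ρ' s * ∑ a, |π s a - π' s a| with hK
  have hK0 : 0 ≤ K :=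
    Finset.sum_nonneg fun s _ => mul_nonneg (hρ'nn s)
      (Finset.sum_nonneg fun a _ => abs_nonneg _)
  have main : D ≤ γ * (D + K) := by
    calc D = ∑ s', |ρ s' - ρ' s'| := rfl
      _ ≤ ∑ s', γ * (∑ s, |ρ s - ρ' s| * P s s' + ∑ s, ρ' s * |P s s' - P' s s'|) :=
          Finset.sum_le_sum fun s' _ => step s'
      _ = γ * (∑ s', ∑ s, |ρ s - ρ' s| * P s s'
            + ∑ s', ∑ s, ρ' s * |P s s' - P' s s'|) := by
          rw [← Finset.mul_sum, Finset.sum_add_distrib]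
      _ = γ * (D + ∑ s, ρ' s * ∑ s', |P s s' - P' s s'|) := by
          rw [Finset.sum_comm, Finset.sum_comm (f := fun s' s => ρ' s * |P s s' - P' s s'|)]
          simp_rw [← Finset.mul_sum, hProw, mul_one]
          rfl
      _ ≤ γ * (D + K) := by
          apply mul_le_mul_of_nonneg_left _ hγ0
          apply add_le_add le_rfl
          apply Finset.sum_le_sum
          intro s _
          exact mul_le_mul_of_nonneg_left (hTV s) (hρ'nn s)
  have hhalf : ∑ s, ρ' s * ((1 / 2) * ∑ a, |π s a - π' s a|) = K / 2 := by
    rw [hK, Finset.sum_div]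
    congr 1; funext s; ring
  rw [hhalf]
  have : 2 * γ / (1 - γ) * (K / 2) = γ * K / (1 - γ) := by
    field_simp
  rw [this, le_div_iff₀ h1γ]
  nlinarith [main]
end

section
/- (Expectation-shift bound between visitation frequencies.) For any two policies π and π' and any function f : S → ℝ, |Σ_s ρ_π(s) f(s) − Σ_s ρ_{π'}(s) f(s)| ≤ (2γ/(1−γ)) · (max_s |f(s)|) · Σ_s ρ_{π'}(s) · D_TV(π‖π')[s]. -/
open Finset

/-- Expectation-shift bound between discounted visitation frequencies:
`|Σ_s ρ_π(s) f(s) − Σ_s ρ_{π'}(s) f(s)|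
  ≤ (2γ/(1−γ)) · max_s |f(s)| · Σ_s ρ_{π'}(s) · D_TV(π‖π')[s]`. -/
theorem visitation_expectation_shift_bound
    {S A : Type*} [Fintype S] [Fintype A] [Nonempty S] [Nonempty A]
    -- transition kernel
    (p : S → A → S → ℝ)
    (hp0 : ∀ s a s', 0 ≤ p s a s') (hp1 : ∀ s a, ∑ s', p s a s' = 1)
    -- discount factor
    (γ : ℝ) (hγ0 : 0 ≤ γ) (hγ1 : γ < 1)
    -- initial state distribution
    (d0 : S → ℝ) (hd00 : ∀ s, 0 ≤ d0 s) (hd01 : ∑ s, d0 s = 1)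
    -- the two policies
    (π π' : S → A → ℝ)
    (hπ0 : ∀ s a, 0 ≤ π s a) (hπ1 : ∀ s, ∑ a, π s a = 1)
    (hπ'0 : ∀ s a, 0 ≤ π' s a) (hπ'1 : ∀ s, ∑ a, π' s a = 1)
    -- discounted visitation frequencies of π and π'
    (ρ ρ' : S → ℝ)
    (hρ : ∀ s', ρ s' = d0 s' + γ * ∑ s, ρ s * (∑ a, π s a * p s a s'))
    (hρ' : ∀ s', ρ' s' = d0 s' + γ * ∑ s, ρ' s * (∑ a, π' s a * p s a s'))
    -- an arbitrary function on states
    (f : S → ℝ) :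
    |(∑ s, ρ s * f s) - ∑ s, ρ' s * f s|
      ≤ (2 * γ / (1 - γ)) * (univ.sup' univ_nonempty fun s => |f s|)
          * ∑ s, ρ' s * ((1 / 2) * ∑ a, |π s a - π' s a|) := by
  have h1γ : (0:ℝ) < 1 - γ := by linarith
  set M : ℝ := univ.sup' univ_nonempty fun s : S => |f s| with hMdef
  have hMf : ∀ s : S, |f s| ≤ M := fun s => by
    rw [hMdef]; exact le_sup' (fun s => |f s|) (mem_univ s)
  have hM0 : 0 ≤ M := le_trans (abs_nonneg _) (hMf (Classical.arbitrary S))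
  -- transition matrices
  set P : S → S → ℝ := fun s s' => ∑ a, π s a * p s a s' with hPdef
  set P' : S → S → ℝ := fun s s' => ∑ a, π' s a * p s a s' with hP'def
  have hP0 : ∀ s s', 0 ≤ P s s' := fun s s' =>
    Finset.sum_nonneg fun a _ => mul_nonneg (hπ0 s a) (hp0 s a s')
  have hP'0 : ∀ s s', 0 ≤ P' s s' := fun s s' =>
    Finset.sum_nonneg fun a _ => mul_nonneg (hπ'0 s a) (hp0 s a s')
  have hProw : ∀ s, ∑ s', P s s' = 1 := by
    intro s
    rw [Finset.sum_comm]
    simp_rw [← Finset.mul_sum, hp1, mul_one, hπ1]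
  have hP'row : ∀ s, ∑ s', P' s s' = 1 := by
    intro s
    rw [Finset.sum_comm]
    simp_rw [← Finset.mul_sum, hp1, mul_one, hπ'1]
  -- nonnegativity of ρ'
  have hρ'0 : ∀ s, 0 ≤ ρ' s := by
    by_contra h
    push_neg at h
    obtain ⟨s₀, hs₀⟩ := h
    set n : S → ℝ := fun s => max (-ρ' s) 0 with hndef
    have hn0 : ∀ s, 0 ≤ n s := fun s => le_max_right _ _
    set N : Finset S := univ.filter (fun s => ρ' s < 0) with hNdef
    have hsumN : ∑ s ∈ N, ρ' s = - ∑ s, n s := by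
      rw [← Finset.sum_filter_add_sum_filter_not univ (fun s => ρ' s < 0) n]
      have h1 : ∑ s ∈ univ.filter (fun s => ρ' s < 0), n s
          = ∑ s ∈ N, (-ρ' s) := by
        apply Finset.sum_congr rfl
        intro s hs
        simp only [Finset.mem_filter] at hs
        simp [hndef, max_eq_left (by linarith [hs.2] : (0:ℝ) ≤ -ρ' s)]
      have h2 : ∑ s ∈ univ.filter (fun s => ¬ ρ' s < 0), n s = 0 := by
        apply Finset.sum_eq_zero
        intro s hs
        simp only [Finset.mem_filter, not_lt] at hs
        simp [hndef, max_eq_right (by linarith [hs.2] : -ρ' s ≤ (0:ℝ))]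
      rw [h1, h2, Finset.sum_neg_distrib]
      ring
    -- sum the fixed point equation over N
    have hq : ∀ s, ∑ s' ∈ N, P' s s' ≤ 1 := by
      intro s
      calc ∑ s' ∈ N, P' s s' ≤ ∑ s', P' s s' :=
            Finset.sum_le_sum_of_subset_of_nonneg (Finset.subset_univ N)
              (fun s' _ _ => hP'0 s s')
        _ = 1 := hP'row s
    have hq0 : ∀ s, 0 ≤ ∑ s' ∈ N, P' s s' := fun s =>
      Finset.sum_nonneg fun s' _ => hP'0 s s'
    have hkey : ∀ s, -n s ≤ ρ' s * ∑ s' ∈ N, P' s s' := by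
      intro s
      by_cases hc : ρ' s < 0
      · have : ρ' s * 1 ≤ ρ' s * ∑ s' ∈ N, P' s s' :=
          mul_le_mul_of_nonpos_left (hq s) hc.le
        have hmax : n s = -ρ' s := max_eq_left (by linarith : (0:ℝ) ≤ -ρ' s)
        rw [hmax]; linarith
      · push_neg at hc
        have hmax : n s = 0 := max_eq_right (by linarith : -ρ' s ≤ (0:ℝ))
        rw [hmax]
        simpa using mul_nonneg hc (hq0 s)
    have heq : ∑ s' ∈ N, ρ' s'
        = (∑ s' ∈ N, d0 s') + γ * ∑ s, ρ' s * ∑ s' ∈ N, P' s s' := by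
      have : ∑ s' ∈ N, ρ' s'
          = ∑ s' ∈ N, (d0 s' + γ * ∑ s, ρ' s * P' s s') := by
        apply Finset.sum_congr rfl
        intro s' _
        exact hρ' s'
      rw [this, Finset.sum_add_distrib, ← Finset.mul_sum]
      congr 1
      rw [Finset.sum_comm]
      simp_rw [← Finset.mul_sum]
    have hlow : - ∑ s, n s ≥ γ * (- ∑ s, n s) := by
      rw [← hsumN, heq]
      have h1 : 0 ≤ ∑ s' ∈ N, d0 s' := Finset.sum_nonneg fun s' _ => hd00 s'
      have h2 : ∑ s, (-n s) ≤ ∑ s, ρ' s * ∑ s' ∈ N, P' s s' :=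
        Finset.sum_le_sum fun s _ => hkey s
      rw [Finset.sum_neg_distrib] at h2
      nlinarith [mul_le_mul_of_nonneg_left h2 hγ0]
    have hnpos : 0 < ∑ s, n s := by
      have : 0 < n s₀ := by
        simp only [hndef]
        exact lt_max_of_lt_left (by linarith)
      exact lt_of_lt_of_le this (Finset.single_le_sum (fun s _ => hn0 s) (mem_univ s₀))
    nlinarith
  -- key inequality on total variation of visitations
  set X : ℝ := ∑ s, |ρ s - ρ' s| with hXdef
  set C : ℝ := ∑ s, ρ' s * ∑ a, |π s a - π' s a| with hCdef
  have hPdiff : ∀ s, ∑ s', |P s s' - P' s s'| ≤ ∑ a, |π s a - π' s a| := by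
    intro s
    have h1 : ∀ s', |P s s' - P' s s'| ≤ ∑ a, |π s a - π' s a| * p s a s' := by
      intro s'
      have : P s s' - P' s s' = ∑ a, (π s a - π' s a) * p s a s' := by
        simp only [hPdef, hP'def, ← Finset.sum_sub_distrib]
        apply Finset.sum_congr rfl
        intro a _; ring
      rw [this]
      calc |∑ a, (π s a - π' s a) * p s a s'| ≤ ∑ a, |(π s a - π' s a) * p s a s'| :=
            Finset.abs_sum_le_sum_abs _ _
        _ = ∑ a, |π s a - π' s a| * p s a s' := by
            apply Finset.sum_congr rfl
            intro a _
            rw [abs_mul, abs_of_nonneg (hp0 s a s')]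
    calc ∑ s', |P s s' - P' s s'| ≤ ∑ s', ∑ a, |π s a - π' s a| * p s a s' :=
          Finset.sum_le_sum fun s' _ => h1 s'
      _ = ∑ a, |π s a - π' s a| := by
          rw [Finset.sum_comm]
          simp_rw [← Finset.mul_sum, hp1, mul_one]
  have hstep : X ≤ γ * X + γ * C := by
    have h1 : ∀ s', |ρ s' - ρ' s'|
        ≤ γ * ∑ s, (|ρ s - ρ' s| * P s s' + ρ' s * |P s s' - P' s s'|) := by
      intro s'
      have heq : ρ s' - ρ' s'
          = γ * ∑ s, ((ρ s - ρ' s) * P s s' + ρ' s * (P s s' - P' s s')) := by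
        rw [hρ s', hρ' s']
        simp only [hPdef, hP'def]
        have : ∑ s, ((ρ s - ρ' s) * (∑ a, π s a * p s a s')
              + ρ' s * ((∑ a, π s a * p s a s') - ∑ a, π' s a * p s a s'))
            = (∑ s, ρ s * ∑ a, π s a * p s a s')
              - ∑ s, ρ' s * ∑ a, π' s a * p s a s' := by
          rw [← Finset.sum_sub_distrib]
          apply Finset.sum_congr rfl
          intro s _; ring
        rw [this]; ring
      rw [heq, abs_mul, abs_of_nonneg hγ0]
      apply mul_le_mul_of_nonneg_left _ hγ0
      calc |∑ s, ((ρ s - ρ' s) * P s s' + ρ' s * (P s s' - P' s s'))|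
          ≤ ∑ s, |(ρ s - ρ' s) * P s s' + ρ' s * (P s s' - P' s s')| :=
            Finset.abs_sum_le_sum_abs _ _
        _ ≤ ∑ s, (|ρ s - ρ' s| * P s s' + ρ' s * |P s s' - P' s s'|) := by
            apply Finset.sum_le_sum
            intro s _
            calc |(ρ s - ρ' s) * P s s' + ρ' s * (P s s' - P' s s')|
                ≤ |(ρ s - ρ' s) * P s s'| + |ρ' s * (P s s' - P' s s')| :=
                  abs_add_le _ _
              _ = |ρ s - ρ' s| * P s s' + ρ' s * |P s s' - P' s s'| := by
                  rw [abs_mul, abs_mul, abs_of_nonneg (hP0 s s'),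
                    abs_of_nonneg (hρ'0 s)]
    calc X ≤ ∑ s', γ * ∑ s, (|ρ s - ρ' s| * P s s' + ρ' s * |P s s' - P' s s'|) :=
          Finset.sum_le_sum fun s' _ => h1 s'
      _ = γ * ∑ s, (|ρ s - ρ' s| * ∑ s', P s s' + ρ' s * ∑ s', |P s s' - P' s s'|) := by
          rw [← Finset.mul_sum]
          congr 1
          rw [Finset.sum_comm]
          apply Finset.sum_congr rfl
          intro s _
          rw [Finset.sum_add_distrib, ← Finset.mul_sum, ← Finset.mul_sum]
      _ ≤ γ * ∑ s, (|ρ s - ρ' s| + ρ' s * ∑ a, |π s a - π' s a|) := by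
          apply mul_le_mul_of_nonneg_left _ hγ0
          apply Finset.sum_le_sum
          intro s _
          rw [hProw s, mul_one]
          exact add_le_add_right
            (mul_le_mul_of_nonneg_left (hPdiff s) (hρ'0 s)) _
      _ = γ * X + γ * C := by
          rw [Finset.sum_add_distrib, mul_add]
  have hXC : X ≤ γ / (1 - γ) * C := by
    rw [div_mul_eq_mul_div, le_div_iff₀ h1γ]
    nlinarith
  -- conclude
  have hRHS : (2 * γ / (1 - γ)) * M * ∑ s, ρ' s * ((1 / 2) * ∑ a, |π s a - π' s a|)
      = M * (γ / (1 - γ) * C) := by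
    simp only [hCdef, Finset.mul_sum]
    apply Finset.sum_congr rfl
    intro s _
    apply Finset.sum_congr rfl
    intro a _
    field_simp
  rw [hRHS]
  calc |(∑ s, ρ s * f s) - ∑ s, ρ' s * f s|
      = |∑ s, (ρ s - ρ' s) * f s| := by
        rw [← Finset.sum_sub_distrib]
        congr 1
        apply Finset.sum_congr rfl
        intro s _; ring
    _ ≤ ∑ s, |(ρ s - ρ' s) * f s| := Finset.abs_sum_le_sum_abs _ _
    _ ≤ ∑ s, |ρ s - ρ' s| * M := by
        apply Finset.sum_le_sum
        intro s _
        rw [abs_mul]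
        exact mul_le_mul_of_nonneg_left (hMf s) (abs_nonneg _)
    _ = M * X := by rw [← Finset.sum_mul]; ring
    _ ≤ M * (γ / (1 - γ) * C) := mul_le_mul_of_nonneg_left hXC hM0
end

section
/- (Theorem 2, offline monotonic improvement bound over the behavior policy.) Let π, π̂_β and π_D be policies (π̂_β the estimated behavior policy, π_D a policy representing the offline dataset) and write ρ_D = ρ_{π_D}. Define J_Δ(π, π̂_β) = J(π) − J(π̂_β), the approximation Ĵ_Δ(π, π̂_β) = Σ_s ρ_D(s) Σ_a π(a|s) A_{π̂_β}(s,a), and 𝔸 = max_{s,a} |A_{π̂_β}(s,a)|. Then J_Δ(π, π̂_β) ≥ Ĵ_Δ(π, π̂_β) − (4γ/(1−γ)) · 𝔸 · (max_s D_TV(π‖π̂_β)[s]) · Σ_s ρ_{π̂_β}(s) D_TV(π‖π̂_β)[s] − (4γ/(1−γ)) · 𝔸 · (max_s D_TV(π‖π̂_β)[s]) · Σ_s ρ_D(s) D_TV(π_D‖π̂_β)[s]. -/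
open Finset

/-- Nonnegativity of discounted visitation frequency. -/
lemma mdp_rho_nonneg {S : Type*} [Fintype S]
    (P : S → S → ℝ) (hP0 : ∀ s s', 0 ≤ P s s') (hP1 : ∀ s, ∑ s', P s s' = 1)
    (γ : ℝ) (hγ0 : 0 ≤ γ) (hγ1 : γ < 1)
    (d0 : S → ℝ) (hd0 : ∀ s, 0 ≤ d0 s)
    (ρ : S → ℝ) (hρ : ∀ s', ρ s' = d0 s' + γ * ∑ s, ρ s * P s s') :
    ∀ s, 0 ≤ ρ s := by
  set N : ℝ := ∑ s, max (-ρ s) 0 with hN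
  have hN0 : 0 ≤ N := Finset.sum_nonneg fun s _ => le_max_right _ _
  have key : ∀ s', max (-ρ s') 0 ≤ γ * ∑ s, max (-ρ s) 0 * P s s' := by
    intro s'
    have hrhs : 0 ≤ γ * ∑ s, max (-ρ s) 0 * P s s' :=
      mul_nonneg hγ0 (Finset.sum_nonneg fun s _ =>
        mul_nonneg (le_max_right _ _) (hP0 s s'))
    rcases le_or_gt (-ρ s') 0 with h | h
    · simpa [max_eq_right h] using hrhs
    · rw [max_eq_left h.le]
      have h1 : -ρ s' = -d0 s' - γ * ∑ s, ρ s * P s s' := by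
        rw [hρ s']; ring
      have h2 : -(∑ s, ρ s * P s s') ≤ ∑ s, max (-ρ s) 0 * P s s' := by
        rw [← Finset.sum_neg_distrib]
        refine Finset.sum_le_sum fun s _ => ?_
        have : -(ρ s * P s s') = (-ρ s) * P s s' := by ring
        rw [this]
        exact mul_le_mul_of_nonneg_right (le_max_left _ _) (hP0 s s')
      have h3 : -d0 s' ≤ 0 := neg_nonpos.mpr (hd0 s')
      calc -ρ s' = -d0 s' + γ * (-(∑ s, ρ s * P s s')) := by rw [h1]; ring
        _ ≤ 0 + γ * ∑ s, max (-ρ s) 0 * P s s' :=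
            add_le_add h3 (mul_le_mul_of_nonneg_left h2 hγ0)
        _ = γ * ∑ s, max (-ρ s) 0 * P s s' := by ring
  have hsum : N ≤ γ * N := by
    calc N ≤ ∑ s', γ * ∑ s, max (-ρ s) 0 * P s s' :=
          Finset.sum_le_sum fun s' _ => key s'
      _ = γ * ∑ s, max (-ρ s) 0 * ∑ s', P s s' := by
          rw [← Finset.mul_sum, Finset.sum_comm]
          simp [Finset.mul_sum]
      _ = γ * N := by
          congr 1
          exact Finset.sum_congr rfl fun s _ => by rw [hP1 s, mul_one]
  have hNz : N = 0 := by nlinarith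
  intro s
  have h1 : max (-ρ s) 0 = 0 := by
    have := Finset.sum_eq_zero_iff_of_nonneg
      (fun s (_ : s ∈ Finset.univ) => le_max_right (-ρ s) 0) |>.mp hNz s (Finset.mem_univ s)
    exact this
  have := le_max_left (-ρ s) 0
  rw [h1] at this
  linarith

/-- Existence of the resolvent fixed point. -/
lemma mdp_exists_fixed {S : Type*} [Fintype S] [Nonempty S]
    (P : S → S → ℝ) (hP0 : ∀ s s', 0 ≤ P s s') (hP1 : ∀ s, ∑ s', P s s' = 1)
    (γ : ℝ) (hγ0 : 0 ≤ γ) (hγ1 : γ < 1) (g : S → ℝ) :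
    ∃ h : S → ℝ, ∀ s, h s = g s + γ * ∑ s', P s s' * h s' := by
  classical
  let L : (S → ℝ) →ₗ[ℝ] (S → ℝ) :=
    { toFun := fun f s => f s - γ * ∑ s', P s s' * f s'
      map_add' := by
        intro f1 f2; funext s
        simp [mul_add, Finset.sum_add_distrib]; ring
      map_smul' := by
        intro c f; funext s
        have h : ∑ s', P s s' * (c * f s') = c * ∑ s', P s s' * f s' := by
          rw [Finset.mul_sum]; exact Finset.sum_congr rfl fun s' _ => by ring
        simp only [Pi.smul_apply, smul_eq_mul, RingHom.id_apply, h]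
        ring }
  have hinj : Function.Injective L := by
    rw [← LinearMap.ker_eq_bot, LinearMap.ker_eq_bot']
    intro f hf
    have hfs : ∀ s, f s = γ * ∑ s', P s s' * f s' := by
      intro s
      have := congrFun hf s
      simp only [L, LinearMap.coe_mk, AddHom.coe_mk, Pi.zero_apply] at this
      linarith
    obtain ⟨s0, _, hs0⟩ := Finset.exists_mem_eq_sup' Finset.univ_nonempty (fun s => |f s|)
    set M := Finset.univ.sup' Finset.univ_nonempty (fun s => |f s|) with hM
    have hMb : ∀ s, |f s| ≤ M := fun s => by
      rw [hM]; exact Finset.le_sup' (fun s => |f s|) (Finset.mem_univ s)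
    have hM0 : 0 ≤ M := le_trans (abs_nonneg _) (hMb (Classical.arbitrary S))
    have hMle : M ≤ γ * M := by
      calc M = |f s0| := hs0
        _ = γ * |∑ s', P s0 s' * f s'| := by
            rw [hfs s0, abs_mul, abs_of_nonneg hγ0]
        _ ≤ γ * ∑ s', P s0 s' * M := by
            refine mul_le_mul_of_nonneg_left ?_ hγ0
            refine le_trans (Finset.abs_sum_le_sum_abs _ _) ?_
            refine Finset.sum_le_sum fun s' _ => ?_
            rw [abs_mul, abs_of_nonneg (hP0 s0 s')]
            exact mul_le_mul_of_nonneg_left (hMb s') (hP0 s0 s')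
        _ = γ * M := by rw [← Finset.sum_mul, hP1 s0, one_mul]
    have hMz : M = 0 := by nlinarith
    funext s
    have := hMb s
    rw [hMz] at this
    have := abs_nonpos_iff.mp this
    simpa using this
  have hsurj : Function.Surjective L := LinearMap.surjective_of_injective hinj
  obtain ⟨h, hh⟩ := hsurj g
  refine ⟨h, fun s => ?_⟩
  have := congrFun hh s
  simp only [L, LinearMap.coe_mk, AddHom.coe_mk] at this
  linarith

/-- Sup-norm bound for a fixed point. -/
lemma mdp_fixed_bound {S : Type*} [Fintype S] [Nonempty S]
    (P : S → S → ℝ) (hP0 : ∀ s s', 0 ≤ P s s') (hP1 : ∀ s, ∑ s', P s s' = 1)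
    (γ : ℝ) (hγ0 : 0 ≤ γ) (hγ1 : γ < 1) (g h : S → ℝ)
    (hfix : ∀ s, h s = g s + γ * ∑ s', P s s' * h s')
    (G : ℝ) (hG : ∀ s, |g s| ≤ G) :
    ∀ s, |h s| ≤ G / (1 - γ) := by
  obtain ⟨s0, _, hs0⟩ := Finset.exists_mem_eq_sup' Finset.univ_nonempty (fun s => |h s|)
  set M := Finset.univ.sup' Finset.univ_nonempty (fun s => |h s|) with hM
  have hMb : ∀ s, |h s| ≤ M := fun s => by
    rw [hM]; exact Finset.le_sup' (fun s => |h s|) (Finset.mem_univ s)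
  have hMle : M ≤ G + γ * M := by
    calc M = |h s0| := hs0
      _ ≤ |g s0| + γ * |∑ s', P s0 s' * h s'| := by
          rw [hfix s0]
          refine le_trans (abs_add_le _ _) ?_
          rw [abs_mul, abs_of_nonneg hγ0]
      _ ≤ G + γ * M := by
          refine add_le_add (hG s0) (mul_le_mul_of_nonneg_left ?_ hγ0)
          refine le_trans (Finset.abs_sum_le_sum_abs _ _) ?_
          calc ∑ s', |P s0 s' * h s'| ≤ ∑ s', P s0 s' * M := by
                refine Finset.sum_le_sum fun s' _ => ?_
                rw [abs_mul, abs_of_nonneg (hP0 s0 s')]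
                exact mul_le_mul_of_nonneg_left (hMb s') (hP0 s0 s')
            _ = M := by rw [← Finset.sum_mul, hP1 s0, one_mul]
  intro s
  have h1 : M ≤ G / (1 - γ) := by
    rw [le_div_iff₀ (by linarith)]
    nlinarith
  exact le_trans (hMb s) h1

/-- Adjoint identity for visitation frequencies. -/
lemma mdp_adjoint {S : Type*} [Fintype S] (P : S → S → ℝ) (γ : ℝ) (d0 ρ f : S → ℝ)
    (hρ : ∀ s', ρ s' = d0 s' + γ * ∑ s, ρ s * P s s') :
    ∑ s, ρ s * f s = (∑ s, d0 s * f s) + γ * ∑ s, ρ s * ∑ s', P s s' * f s' := by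
  have e : ∀ s', ρ s' * f s' = d0 s' * f s' + ∑ s, γ * (ρ s * (P s s' * f s')) := by
    intro s'
    rw [hρ s', add_mul, mul_assoc, Finset.sum_mul, Finset.mul_sum]
    congr 1
    exact Finset.sum_congr rfl fun s _ => by ring
  calc ∑ s', ρ s' * f s'
      = ∑ s', (d0 s' * f s' + ∑ s, γ * (ρ s * (P s s' * f s'))) :=
        Finset.sum_congr rfl fun s' _ => e s'
    _ = (∑ s', d0 s' * f s') + ∑ s', ∑ s, γ * (ρ s * (P s s' * f s')) :=
        Finset.sum_add_distrib
    _ = (∑ s, d0 s * f s) + γ * ∑ s, ρ s * ∑ s', P s s' * f s' := by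
        congr 1
        rw [Finset.sum_comm, Finset.mul_sum]
        refine Finset.sum_congr rfl fun s _ => ?_
        rw [Finset.mul_sum, Finset.mul_sum]


/-- Core inequality. -/
lemma mdp_core {S : Type*} [Fintype S] [Nonempty S]
    (Pπ Pβ PD : S → S → ℝ)
    (hPπ0 : ∀ s s', 0 ≤ Pπ s s') (hPπ1 : ∀ s, ∑ s', Pπ s s' = 1)
    (hPβ0 : ∀ s s', 0 ≤ Pβ s s') (hPβ1 : ∀ s, ∑ s', Pβ s s' = 1)
    (hPD0 : ∀ s s', 0 ≤ PD s s') (hPD1 : ∀ s, ∑ s', PD s s' = 1)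
    (γ : ℝ) (hγ0 : 0 ≤ γ) (hγ1 : γ < 1)
    (d0 : S → ℝ) (hd0 : ∀ s, 0 ≤ d0 s)
    (g W : S → ℝ)
    (hW : ∀ s, W s = g s + γ * ∑ s', Pπ s s' * W s')
    (ρβ ρD : S → ℝ)
    (hρβ : ∀ s', ρβ s' = d0 s' + γ * ∑ s, ρβ s * Pβ s s')
    (hρD : ∀ s', ρD s' = d0 s' + γ * ∑ s, ρD s * PD s s')
    (G : ℝ) (hG : ∀ s, |g s| ≤ G)
    (ε εD : S → ℝ)
    (hPπβ : ∀ (f : S → ℝ) (M : ℝ), (∀ s', |f s'| ≤ M) →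
        ∀ s, |∑ s', (Pπ s s' - Pβ s s') * f s'| ≤ 2 * ε s * M)
    (hPDβ : ∀ (f : S → ℝ) (M : ℝ), (∀ s', |f s'| ≤ M) →
        ∀ s, |∑ s', (PD s s' - Pβ s s') * f s'| ≤ 2 * εD s * M) :
    ∑ s, d0 s * W s
      ≥ (∑ s, ρD s * g s)
        - (2 * γ / (1 - γ)) * G * (∑ s, ρβ s * ε s)
        - (2 * γ / (1 - γ)) * G * (∑ s, ρD s * εD s) := by
  have hγ1' : (0:ℝ) < 1 - γ := by linarith
  have hρβ0 : ∀ s, 0 ≤ ρβ s := mdp_rho_nonneg Pβ hPβ0 hPβ1 γ hγ0 hγ1 d0 hd0 ρβ hρβ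
  have hρD0 : ∀ s, 0 ≤ ρD s := mdp_rho_nonneg PD hPD0 hPD1 γ hγ0 hγ1 d0 hd0 ρD hρD
  have hG0 : 0 ≤ G := le_trans (abs_nonneg _) (hG (Classical.arbitrary S))
  set B : ℝ := G / (1 - γ) with hB
  have hB0 : 0 ≤ B := div_nonneg hG0 (le_of_lt hγ1')
  have hWbd : ∀ s, |W s| ≤ B := mdp_fixed_bound Pπ hPπ0 hPπ1 γ hγ0 hγ1 g W hW G hG
  obtain ⟨h, hfix⟩ := mdp_exists_fixed Pβ hPβ0 hPβ1 γ hγ0 hγ1 g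
  have hhbd : ∀ s, |h s| ≤ B := mdp_fixed_bound Pβ hPβ0 hPβ1 γ hγ0 hγ1 g h hfix G hG
  -- adjoint identities
  have adjβW := mdp_adjoint Pβ γ d0 ρβ W hρβ
  have adjβh := mdp_adjoint Pβ γ d0 ρβ h hρβ
  have adjDh := mdp_adjoint PD γ d0 ρD h hρD
  -- expansions
  have E1 : ∑ s, ρβ s * W s
      = (∑ s, ρβ s * g s) + γ * ∑ s, ρβ s * ∑ s', Pπ s s' * W s' := by
    calc ∑ s, ρβ s * W s
        = ∑ s, (ρβ s * g s + γ * (ρβ s * ∑ s', Pπ s s' * W s')) :=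
          Finset.sum_congr rfl fun s _ => by rw [hW s]; ring
      _ = _ := by rw [Finset.sum_add_distrib, ← Finset.mul_sum]
  have E2 : ∑ s, ρβ s * g s
      = (∑ s, ρβ s * h s) - γ * ∑ s, ρβ s * ∑ s', Pβ s s' * h s' := by
    calc ∑ s, ρβ s * g s
        = ∑ s, (ρβ s * h s - γ * (ρβ s * ∑ s', Pβ s s' * h s')) :=
          Finset.sum_congr rfl fun s _ => by
            have := hfix s
            have hg : g s = h s - γ * ∑ s', Pβ s s' * h s' := by linarith
            rw [hg]; ring
      _ = _ := by rw [Finset.sum_sub_distrib, ← Finset.mul_sum]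
  have E3 : ∑ s, ρD s * g s
      = (∑ s, ρD s * h s) - γ * ∑ s, ρD s * ∑ s', Pβ s s' * h s' := by
    calc ∑ s, ρD s * g s
        = ∑ s, (ρD s * h s - γ * (ρD s * ∑ s', Pβ s s' * h s')) :=
          Finset.sum_congr rfl fun s _ => by
            have := hfix s
            have hg : g s = h s - γ * ∑ s', Pβ s s' * h s' := by linarith
            rw [hg]; ring
      _ = _ := by rw [Finset.sum_sub_distrib, ← Finset.mul_sum]
  -- difference sums
  have D1 : ∑ s, ρβ s * ∑ s', (Pπ s s' - Pβ s s') * W s'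
      = (∑ s, ρβ s * ∑ s', Pπ s s' * W s') - ∑ s, ρβ s * ∑ s', Pβ s s' * W s' := by
    rw [← Finset.sum_sub_distrib]
    refine Finset.sum_congr rfl fun s _ => ?_
    rw [← mul_sub, ← Finset.sum_sub_distrib]
    congr 1
    exact Finset.sum_congr rfl fun s' _ => by ring
  have D2 : ∑ s, ρD s * ∑ s', (PD s s' - Pβ s s') * h s'
      = (∑ s, ρD s * ∑ s', PD s s' * h s') - ∑ s, ρD s * ∑ s', Pβ s s' * h s' := by
    rw [← Finset.sum_sub_distrib]
    refine Finset.sum_congr rfl fun s _ => ?_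
    rw [← mul_sub, ← Finset.sum_sub_distrib]
    congr 1
    exact Finset.sum_congr rfl fun s' _ => by ring
  -- main identity
  have main : ∑ s, d0 s * W s
      = (∑ s, ρD s * g s)
        + γ * (∑ s, ρβ s * ∑ s', (Pπ s s' - Pβ s s') * W s')
        - γ * (∑ s, ρD s * ∑ s', (PD s s' - Pβ s s') * h s') := by
    have hD1' : γ * (∑ s, ρβ s * ∑ s', (Pπ s s' - Pβ s s') * W s')
        = γ * (∑ s, ρβ s * ∑ s', Pπ s s' * W s')
          - γ * (∑ s, ρβ s * ∑ s', Pβ s s' * W s') := by rw [D1]; ring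
    have hD2' : γ * (∑ s, ρD s * ∑ s', (PD s s' - Pβ s s') * h s')
        = γ * (∑ s, ρD s * ∑ s', PD s s' * h s')
          - γ * (∑ s, ρD s * ∑ s', Pβ s s' * h s') := by rw [D2]; ring
    linarith [adjβW, adjβh, adjDh, E1, E2, E3, hD1', hD2']
  -- bounds
  have bound1 : γ * (∑ s, ρβ s * ∑ s', (Pπ s s' - Pβ s s') * W s')
      ≥ -((2 * γ / (1 - γ)) * G * (∑ s, ρβ s * ε s)) := by
    have step : ∑ s, ρβ s * ∑ s', (Pπ s s' - Pβ s s') * W s'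
        ≥ ∑ s, -(ρβ s * (2 * ε s * B)) := by
      refine Finset.sum_le_sum fun s _ => ?_
      have hb := hPπβ W B hWbd s
      have habs := neg_abs_le (∑ s', (Pπ s s' - Pβ s s') * W s')
      have : -(2 * ε s * B) ≤ ∑ s', (Pπ s s' - Pβ s s') * W s' := by linarith
      nlinarith [hρβ0 s]
    have e : ∑ s, -(ρβ s * (2 * ε s * B)) = -((2 * B) * ∑ s, ρβ s * ε s) := by
      rw [Finset.mul_sum, ← Finset.sum_neg_distrib]
      exact Finset.sum_congr rfl fun s _ => by ring
    have e2 : γ * ((2 * B) * ∑ s, ρβ s * ε s)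
        = (2 * γ / (1 - γ)) * G * (∑ s, ρβ s * ε s) := by
      rw [hB]; field_simp
    have step2 : γ * (∑ s, ρβ s * ∑ s', (Pπ s s' - Pβ s s') * W s')
        ≥ γ * (-((2 * B) * ∑ s, ρβ s * ε s)) := by
      rw [← e]
      exact mul_le_mul_of_nonneg_left step hγ0
    calc γ * (∑ s, ρβ s * ∑ s', (Pπ s s' - Pβ s s') * W s')
        ≥ γ * (-((2 * B) * ∑ s, ρβ s * ε s)) := step2
      _ = -(γ * ((2 * B) * ∑ s, ρβ s * ε s)) := by ring
      _ = -((2 * γ / (1 - γ)) * G * (∑ s, ρβ s * ε s)) := by rw [e2]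
  have bound2 : γ * (∑ s, ρD s * ∑ s', (PD s s' - Pβ s s') * h s')
      ≤ (2 * γ / (1 - γ)) * G * (∑ s, ρD s * εD s) := by
    have step : ∑ s, ρD s * ∑ s', (PD s s' - Pβ s s') * h s'
        ≤ ∑ s, ρD s * (2 * εD s * B) := by
      refine Finset.sum_le_sum fun s _ => ?_
      have hb := hPDβ h B hhbd s
      have habs := le_abs_self (∑ s', (PD s s' - Pβ s s') * h s')
      have : ∑ s', (PD s s' - Pβ s s') * h s' ≤ 2 * εD s * B := by linarith
      nlinarith [hρD0 s]
    have e : ∑ s, ρD s * (2 * εD s * B) = (2 * B) * ∑ s, ρD s * εD s := by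
      rw [Finset.mul_sum]
      exact Finset.sum_congr rfl fun s _ => by ring
    have e2 : γ * ((2 * B) * ∑ s, ρD s * εD s)
        = (2 * γ / (1 - γ)) * G * (∑ s, ρD s * εD s) := by
      rw [hB]; field_simp
    calc γ * (∑ s, ρD s * ∑ s', (PD s s' - Pβ s s') * h s')
        ≤ γ * ((2 * B) * ∑ s, ρD s * εD s) := by
          rw [← e]; exact mul_le_mul_of_nonneg_left step hγ0
      _ = _ := e2
  linarith [main, bound1, bound2]

/-- Row properties of the induced state-transition matrix. -/
lemma mdp_rows {S A : Type*} [Fintype S] [Fintype A]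
    (p : S → A → S → ℝ) (hp0 : ∀ s a s', 0 ≤ p s a s') (hp1 : ∀ s a, ∑ s', p s a s' = 1)
    (π : S → A → ℝ) (hπ0 : ∀ s a, 0 ≤ π s a) (hπ1 : ∀ s, ∑ a, π s a = 1) :
    (∀ s s', 0 ≤ ∑ a, π s a * p s a s') ∧ (∀ s, ∑ s', ∑ a, π s a * p s a s' = 1) := by
  constructor
  · intro s s'
    exact Finset.sum_nonneg fun a _ => mul_nonneg (hπ0 s a) (hp0 s a s')
  · intro s
    rw [Finset.sum_comm]
    calc ∑ a, ∑ s', π s a * p s a s' = ∑ a, π s a * ∑ s', p s a s' :=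
          Finset.sum_congr rfl fun a _ => (Finset.mul_sum _ _ _).symm
      _ = ∑ a, π s a := Finset.sum_congr rfl fun a _ => by rw [hp1 s a, mul_one]
      _ = 1 := hπ1 s

/-- Row-difference bound. -/
lemma mdp_rowdiff {S A : Type*} [Fintype S] [Fintype A] [Nonempty S]
    (p : S → A → S → ℝ) (hp0 : ∀ s a s', 0 ≤ p s a s') (hp1 : ∀ s a, ∑ s', p s a s' = 1)
    (π1 π2 : S → A → ℝ) (f : S → ℝ) (M : ℝ) (hf : ∀ s, |f s| ≤ M) (s : S) :
    |∑ s', ((∑ a, π1 s a * p s a s') - ∑ a, π2 s a * p s a s') * f s'|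
      ≤ (∑ a, |π1 s a - π2 s a|) * M := by
  have hM0 : 0 ≤ M := le_trans (abs_nonneg _) (hf (Classical.arbitrary S))
  have e : ∑ s', ((∑ a, π1 s a * p s a s') - ∑ a, π2 s a * p s a s') * f s'
      = ∑ a, (π1 s a - π2 s a) * ∑ s', p s a s' * f s' := by
    calc ∑ s', ((∑ a, π1 s a * p s a s') - ∑ a, π2 s a * p s a s') * f s'
        = ∑ s', ∑ a, (π1 s a - π2 s a) * (p s a s' * f s') := by
          refine Finset.sum_congr rfl fun s' _ => ?_
          rw [← Finset.sum_sub_distrib, Finset.sum_mul]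
          exact Finset.sum_congr rfl fun a _ => by ring
      _ = ∑ a, ∑ s', (π1 s a - π2 s a) * (p s a s' * f s') := Finset.sum_comm
      _ = ∑ a, (π1 s a - π2 s a) * ∑ s', p s a s' * f s' :=
          Finset.sum_congr rfl fun a _ => (Finset.mul_sum _ _ _).symm
  rw [e]
  refine le_trans (Finset.abs_sum_le_sum_abs _ _) ?_
  rw [Finset.sum_mul]
  refine Finset.sum_le_sum fun a _ => ?_
  rw [abs_mul]
  refine mul_le_mul_of_nonneg_left ?_ (abs_nonneg _)
  refine le_trans (Finset.abs_sum_le_sum_abs _ _) ?_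
  calc ∑ s', |p s a s' * f s'| ≤ ∑ s', p s a s' * M := by
        refine Finset.sum_le_sum fun s' _ => ?_
        rw [abs_mul, abs_of_nonneg (hp0 s a s')]
        exact mul_le_mul_of_nonneg_left (hf s') (hp0 s a s')
    _ = M := by rw [← Finset.sum_mul, hp1 s a, one_mul]

/-- Theorem 2: offline monotonic improvement bound over the behavior policy. -/
theorem offline_improvement_bound_behavior
    {S A : Type*} [Fintype S] [Fintype A] [Nonempty S] [Nonempty A]
    -- transition kernel
    (p : S → A → S → ℝ)
    (hp0 : ∀ s a s', 0 ≤ p s a s') (hp1 : ∀ s a, ∑ s', p s a s' = 1)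
    -- discount factor
    (γ : ℝ) (hγ0 : 0 ≤ γ) (hγ1 : γ < 1)
    -- initial state distribution
    (d0 : S → ℝ) (hd00 : ∀ s, 0 ≤ d0 s) (hd01 : ∑ s, d0 s = 1)
    -- reward function
    (r : S → A → ℝ)
    -- policies: target π, estimated behavior π̂β, dataset policy π_D
    (π πβ πD : S → A → ℝ)
    (hπ0 : ∀ s a, 0 ≤ π s a) (hπ1 : ∀ s, ∑ a, π s a = 1)
    (hπβ0 : ∀ s a, 0 ≤ πβ s a) (hπβ1 : ∀ s, ∑ a, πβ s a = 1)
    (hπD0 : ∀ s a, 0 ≤ πD s a) (hπD1 : ∀ s, ∑ a, πD s a = 1)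
    -- value functions of π and π̂β (Bellman equations)
    (V Vβ : S → ℝ)
    (hV : ∀ s, V s = ∑ a, π s a * (r s a + γ * ∑ s', p s a s' * V s'))
    (hVβ : ∀ s, Vβ s = ∑ a, πβ s a * (r s a + γ * ∑ s', p s a s' * Vβ s'))
    -- discounted visitation frequencies of π̂β and of the dataset policy π_D
    (ρβ ρD : S → ℝ)
    (hρβ : ∀ s', ρβ s' = d0 s' + γ * ∑ s, ρβ s * (∑ a, πβ s a * p s a s'))
    (hρD : ∀ s', ρD s' = d0 s' + γ * ∑ s, ρD s * (∑ a, πD s a * p s a s')) :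
    (∑ s, d0 s * V s) - (∑ s, d0 s * Vβ s)
      ≥ (∑ s, ρD s * ∑ a, π s a * ((r s a + γ * ∑ s', p s a s' * Vβ s') - Vβ s))
        - (4 * γ / (1 - γ))
            * (univ.sup' univ_nonempty fun sa : S × A =>
                |(r sa.1 sa.2 + γ * ∑ s', p sa.1 sa.2 s' * Vβ s') - Vβ sa.1|)
            * (univ.sup' univ_nonempty fun s =>
                (1 / 2) * ∑ a, |π s a - πβ s a|)
            * (∑ s, ρβ s * ((1 / 2) * ∑ a, |π s a - πβ s a|))
        - (4 * γ / (1 - γ))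
            * (univ.sup' univ_nonempty fun sa : S × A =>
                |(r sa.1 sa.2 + γ * ∑ s', p sa.1 sa.2 s' * Vβ s') - Vβ sa.1|)
            * (univ.sup' univ_nonempty fun s =>
                (1 / 2) * ∑ a, |π s a - πβ s a|)
            * (∑ s, ρD s * ((1 / 2) * ∑ a, |πD s a - πβ s a|)) := by
  classical
  have hγ1' : (0:ℝ) < 1 - γ := by linarith
  set 𝔸 : ℝ := univ.sup' univ_nonempty (fun sa : S × A =>
      |(r sa.1 sa.2 + γ * ∑ s', p sa.1 sa.2 s' * Vβ s') - Vβ sa.1|) with h𝔸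
  set εm : ℝ := univ.sup' univ_nonempty (fun s =>
      (1 / 2) * ∑ a, |π s a - πβ s a|) with hεm
  have h𝔸b : ∀ s a, |(r s a + γ * ∑ s', p s a s' * Vβ s') - Vβ s| ≤ 𝔸 := by
    intro s a
    exact Finset.le_sup' (fun sa : S × A =>
      |(r sa.1 sa.2 + γ * ∑ s', p sa.1 sa.2 s' * Vβ s') - Vβ sa.1|)
      (Finset.mem_univ (s, a))
  have h𝔸0 : 0 ≤ 𝔸 :=
    le_trans (abs_nonneg _) (h𝔸b (Classical.arbitrary S) (Classical.arbitrary A))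
  have hεmb : ∀ s, (1 / 2) * ∑ a, |π s a - πβ s a| ≤ εm := fun s =>
    Finset.le_sup' (fun s => (1 / 2) * ∑ a, |π s a - πβ s a|) (Finset.mem_univ s)
  have hεm0 : 0 ≤ εm := by
    refine le_trans ?_ (hεmb (Classical.arbitrary S))
    positivity
  obtain ⟨hPπ0, hPπ1⟩ := mdp_rows p hp0 hp1 π hπ0 hπ1
  obtain ⟨hPβ0, hPβ1⟩ := mdp_rows p hp0 hp1 πβ hπβ0 hπβ1
  obtain ⟨hPD0, hPD1⟩ := mdp_rows p hp0 hp1 πD hπD0 hπD1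
  -- the advantage of πβ against itself vanishes
  have hβ0 : ∀ s, ∑ a, πβ s a * ((r s a + γ * ∑ s', p s a s' * Vβ s') - Vβ s) = 0 := by
    intro s
    calc ∑ a, πβ s a * ((r s a + γ * ∑ s', p s a s' * Vβ s') - Vβ s)
        = ∑ a, (πβ s a * (r s a + γ * ∑ s', p s a s' * Vβ s') - πβ s a * Vβ s) :=
          Finset.sum_congr rfl fun a _ => by ring
      _ = (∑ a, πβ s a * (r s a + γ * ∑ s', p s a s' * Vβ s')) - ∑ a, πβ s a * Vβ s :=
          Finset.sum_sub_distrib _ _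
      _ = Vβ s - Vβ s := by rw [← hVβ s, ← Finset.sum_mul, hπβ1 s, one_mul]
      _ = 0 := sub_self _
  -- bound on g
  have hG : ∀ s, |∑ a, π s a * ((r s a + γ * ∑ s', p s a s' * Vβ s') - Vβ s)|
      ≤ 2 * 𝔸 * εm := by
    intro s
    have hg2 : ∑ a, π s a * ((r s a + γ * ∑ s', p s a s' * Vβ s') - Vβ s)
        = ∑ a, (π s a - πβ s a) * ((r s a + γ * ∑ s', p s a s' * Vβ s') - Vβ s) := by
      rw [← sub_zero (∑ a, π s a * ((r s a + γ * ∑ s', p s a s' * Vβ s') - Vβ s)),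
        ← hβ0 s, ← Finset.sum_sub_distrib]
      exact Finset.sum_congr rfl fun a _ => by ring
    rw [hg2]
    refine le_trans (Finset.abs_sum_le_sum_abs _ _) ?_
    have step : ∑ a, |(π s a - πβ s a) * ((r s a + γ * ∑ s', p s a s' * Vβ s') - Vβ s)|
        ≤ ∑ a, |π s a - πβ s a| * 𝔸 := by
      refine Finset.sum_le_sum fun a _ => ?_
      rw [abs_mul]
      exact mul_le_mul_of_nonneg_left (h𝔸b s a) (abs_nonneg _)
    refine le_trans step ?_
    rw [← Finset.sum_mul]
    have := hεmb s
    nlinarith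
  -- Bellman recursion for the value difference
  have hW : ∀ s, V s - Vβ s
      = (∑ a, π s a * ((r s a + γ * ∑ s', p s a s' * Vβ s') - Vβ s))
        + γ * ∑ s', (∑ a, π s a * p s a s') * (V s' - Vβ s') := by
    intro s
    have gexpand : ∑ a, π s a * ((r s a + γ * ∑ s', p s a s' * Vβ s') - Vβ s)
        = (∑ a, π s a * (r s a + γ * ∑ s', p s a s' * Vβ s')) - Vβ s := by
      calc ∑ a, π s a * ((r s a + γ * ∑ s', p s a s' * Vβ s') - Vβ s)
          = ∑ a, (π s a * (r s a + γ * ∑ s', p s a s' * Vβ s') - π s a * Vβ s) :=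
            Finset.sum_congr rfl fun a _ => by ring
        _ = (∑ a, π s a * (r s a + γ * ∑ s', p s a s' * Vβ s')) - ∑ a, π s a * Vβ s :=
            Finset.sum_sub_distrib _ _
        _ = _ := by rw [← Finset.sum_mul, hπ1 s, one_mul]
    have lhsr : (∑ a, π s a * (r s a + γ * ∑ s', p s a s' * V s'))
        - (∑ a, π s a * (r s a + γ * ∑ s', p s a s' * Vβ s'))
        = ∑ a, ∑ s', γ * (π s a * (p s a s' * (V s' - Vβ s'))) := by
      rw [← Finset.sum_sub_distrib]
      refine Finset.sum_congr rfl fun a _ => ?_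
      have hsub : (∑ s', p s a s' * V s') - ∑ s', p s a s' * Vβ s'
          = ∑ s', p s a s' * (V s' - Vβ s') := by
        rw [← Finset.sum_sub_distrib]
        exact Finset.sum_congr rfl fun s' _ => by ring
      calc π s a * (r s a + γ * ∑ s', p s a s' * V s')
            - π s a * (r s a + γ * ∑ s', p s a s' * Vβ s')
          = γ * (π s a * ((∑ s', p s a s' * V s') - ∑ s', p s a s' * Vβ s')) := by ring
        _ = γ * (π s a * ∑ s', p s a s' * (V s' - Vβ s')) := by rw [hsub]
        _ = ∑ s', γ * (π s a * (p s a s' * (V s' - Vβ s'))) := by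
            rw [Finset.mul_sum, Finset.mul_sum]
    have rhsr : γ * ∑ s', (∑ a, π s a * p s a s') * (V s' - Vβ s')
        = ∑ a, ∑ s', γ * (π s a * (p s a s' * (V s' - Vβ s'))) := by
      rw [Finset.mul_sum]
      calc ∑ s', γ * ((∑ a, π s a * p s a s') * (V s' - Vβ s'))
          = ∑ s', ∑ a, γ * (π s a * (p s a s' * (V s' - Vβ s'))) := by
            refine Finset.sum_congr rfl fun s' _ => ?_
            rw [Finset.sum_mul, Finset.mul_sum]
            exact Finset.sum_congr rfl fun a _ => by ring
        _ = _ := Finset.sum_comm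
    rw [hV s, gexpand, rhsr, ← lhsr]
    ring
  -- row-difference bounds in the shape needed by the core lemma
  have hPπβ : ∀ (f : S → ℝ) (M : ℝ), (∀ s', |f s'| ≤ M) → ∀ s,
      |∑ s', ((∑ a, π s a * p s a s') - ∑ a, πβ s a * p s a s') * f s'|
        ≤ 2 * ((1 / 2) * ∑ a, |π s a - πβ s a|) * M := by
    intro f M hf s
    refine le_of_le_of_eq (mdp_rowdiff p hp0 hp1 π πβ f M hf s) ?_
    ring
  have hPDβ : ∀ (f : S → ℝ) (M : ℝ), (∀ s', |f s'| ≤ M) → ∀ s,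
      |∑ s', ((∑ a, πD s a * p s a s') - ∑ a, πβ s a * p s a s') * f s'|
        ≤ 2 * ((1 / 2) * ∑ a, |πD s a - πβ s a|) * M := by
    intro f M hf s
    refine le_of_le_of_eq (mdp_rowdiff p hp0 hp1 πD πβ f M hf s) ?_
    ring
  have core : ∑ s, d0 s * (V s - Vβ s)
      ≥ (∑ s, ρD s * ∑ a, π s a * ((r s a + γ * ∑ s', p s a s' * Vβ s') - Vβ s))
        - (2 * γ / (1 - γ)) * (2 * 𝔸 * εm)
            * (∑ s, ρβ s * ((1 / 2) * ∑ a, |π s a - πβ s a|))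
        - (2 * γ / (1 - γ)) * (2 * 𝔸 * εm)
            * (∑ s, ρD s * ((1 / 2) * ∑ a, |πD s a - πβ s a|)) :=
    mdp_core (fun s s' => ∑ a, π s a * p s a s') (fun s s' => ∑ a, πβ s a * p s a s')
      (fun s s' => ∑ a, πD s a * p s a s')
      hPπ0 hPπ1 hPβ0 hPβ1 hPD0 hPD1 γ hγ0 hγ1 d0 hd00
      (fun s => ∑ a, π s a * ((r s a + γ * ∑ s', p s a s' * Vβ s') - Vβ s))
      (fun s => V s - Vβ s) hW ρβ ρD hρβ hρD (2 * 𝔸 * εm) hG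
      (fun s => (1 / 2) * ∑ a, |π s a - πβ s a|)
      (fun s => (1 / 2) * ∑ a, |πD s a - πβ s a|) hPπβ hPDβ
  have lhs : (∑ s, d0 s * V s) - (∑ s, d0 s * Vβ s) = ∑ s, d0 s * (V s - Vβ s) := by
    rw [← Finset.sum_sub_distrib]
    exact Finset.sum_congr rfl fun s _ => (mul_sub _ _ _).symm
  rw [lhs]
  have c1 : (2 * γ / (1 - γ)) * (2 * 𝔸 * εm)
        * (∑ s, ρβ s * ((1 / 2) * ∑ a, |π s a - πβ s a|))
      = (4 * γ / (1 - γ)) * 𝔸 * εm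
        * (∑ s, ρβ s * ((1 / 2) * ∑ a, |π s a - πβ s a|)) := by ring
  have c2 : (2 * γ / (1 - γ)) * (2 * 𝔸 * εm)
        * (∑ s, ρD s * ((1 / 2) * ∑ a, |πD s a - πβ s a|))
      = (4 * γ / (1 - γ)) * 𝔸 * εm
        * (∑ s, ρD s * ((1 / 2) * ∑ a, |πD s a - πβ s a|)) := by ring
  linarith [core, c1, c2]
end

section
/- (Theorem 3, offline monotonic improvement bound over an updated policy π_k.) Let π, π_k, π̂_β and π_D be policies (π̂_β the estimated behavior policy, π_D a policy representing the offline dataset) and write ρ_D = ρ_{π_D}. Define J_Δ(π, π_k) = J(π) − J(π_k), the approximation Ĵ_Δ(π, π_k) = Σ_s ρ_D(s) Σ_a π(a|s) A_{π_k}(s,a), and 𝔸_k = max_{s,a} |A_{π_k}(s,a)|. Then J_Δ(π, π_k) ≥ Ĵ_Δ(π, π_k) − (4γ/(1−γ)) · 𝔸_k · (max_s D_TV(π‖π_k)[s]) · [ Σ_s ρ_{π_k}(s) D_TV(π‖π_k)[s] + Σ_s ρ_{π̂_β}(s) D_TV(π_k‖π̂_β)[s] + Σ_s ρ_D(s) D_TV(π̂_β‖π_D)[s]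 ]. -/
open Finset

lemma mdp_l1_step {S T : Type*} [Fintype S] [Fintype T]
    (x : S → ℝ) (P : S → T → ℝ) (hP0 : ∀ s t, 0 ≤ P s t) (hP1 : ∀ s, ∑ t, P s t = 1) :
    ∑ t, |∑ s, x s * P s t| ≤ ∑ s, |x s| := by
  calc ∑ t, |∑ s, x s * P s t| ≤ ∑ t, ∑ s, |x s| * P s t := by
        apply Finset.sum_le_sum; intro t _
        refine (Finset.abs_sum_le_sum_abs _ _).trans ?_
        apply Finset.sum_le_sum; intro s _
        rw [abs_mul, abs_of_nonneg (hP0 s t)]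
    _ = ∑ s, |x s| * ∑ t, P s t := by
        rw [Finset.sum_comm]; simp [Finset.mul_sum]
    _ = ∑ s, |x s| := by simp [hP1]

lemma mdp_fp_exists {S : Type*} [Fintype S] (P : S → S → ℝ)
    (hP0 : ∀ s t, 0 ≤ P s t) (hP1 : ∀ s, ∑ t, P s t = 1)
    (γ : ℝ) (hγ0 : 0 ≤ γ) (hγ1 : γ < 1) (c : S → ℝ) :
    ∃ ρ : S → ℝ, ∀ t, ρ t = c t + γ * ∑ s, ρ s * P s t := by
  classical
  set L : (S → ℝ) →ₗ[ℝ] (S → ℝ) :=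
    { toFun := fun x t => x t - γ * ∑ s, x s * P s t
      map_add' := by
        intro x y; funext t
        simp only [Pi.add_apply]
        rw [show ∑ s, (x s + y s) * P s t = ∑ s, (x s * P s t + y s * P s t) by
          apply Finset.sum_congr rfl; intros; ring]
        rw [Finset.sum_add_distrib]; ring
      map_smul' := by
        intro m x; funext t
        simp only [Pi.smul_apply, smul_eq_mul, RingHom.id_apply]
        rw [show ∑ s, m * x s * P s t = ∑ s, m * (x s * P s t) by
          apply Finset.sum_congr rfl; intros; ring]
        rw [← Finset.mul_sum]; ring } with hL
  have hinj : Function.Injective L := by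
    rw [← LinearMap.ker_eq_bot, LinearMap.ker_eq_bot']
    intro x hx
    have hx' : ∀ t, x t = γ * ∑ s, x s * P s t := by
      intro t
      have := congrFun hx t
      simp only [hL, LinearMap.coe_mk, AddHom.coe_mk, Pi.zero_apply] at this
      linarith
    have h1 : ∑ t, |x t| ≤ γ * ∑ t, |x t| := by
      calc ∑ t, |x t| = ∑ t, γ * |∑ s, x s * P s t| := by
            apply Finset.sum_congr rfl; intro t _
            rw [hx' t, abs_mul, abs_of_nonneg hγ0]
        _ = γ * ∑ t, |∑ s, x s * P s t| := by rw [Finset.mul_sum]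
        _ ≤ γ * ∑ s, |x s| := by
            apply mul_le_mul_of_nonneg_left (mdp_l1_step x P hP0 hP1) hγ0
    have h2 : 0 ≤ ∑ t, |x t| := Finset.sum_nonneg fun t _ => abs_nonneg _
    have h3 : ∑ t, |x t| = 0 := by nlinarith
    funext t
    have := (Finset.sum_eq_zero_iff_of_nonneg (fun t _ => abs_nonneg (x t))).mp h3 t (mem_univ t)
    simpa using abs_eq_zero.mp this
  have hsurj : Function.Surjective L := LinearMap.injective_iff_surjective.mp hinj
  obtain ⟨ρ, hρ⟩ := hsurj c
  refine ⟨ρ, fun t => ?_⟩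
  have := congrFun hρ t
  simp only [hL, LinearMap.coe_mk, AddHom.coe_mk] at this
  linarith

lemma mdp_fp_nonneg {S : Type*} [Fintype S] (P : S → S → ℝ)
    (hP0 : ∀ s t, 0 ≤ P s t) (hP1 : ∀ s, ∑ t, P s t = 1)
    (γ : ℝ) (hγ0 : 0 ≤ γ) (hγ1 : γ < 1) (c : S → ℝ) (hc : ∀ s, 0 ≤ c s)
    (ρ : S → ℝ) (hρ : ∀ t, ρ t = c t + γ * ∑ s, ρ s * P s t) : ∀ s, 0 ≤ ρ s := by
  set n : S → ℝ := fun s => max (-ρ s) 0 with hn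
  have hn0 : ∀ s, 0 ≤ n s := fun s => le_max_right _ _
  have hnρ : ∀ s, -n s ≤ ρ s := fun s => by
    have : -ρ s ≤ n s := le_max_left _ _
    linarith
  have key : ∀ t, n t ≤ γ * ∑ s, n s * P s t := by
    intro t
    have hSnn : 0 ≤ ∑ s, n s * P s t :=
      Finset.sum_nonneg fun s _ => mul_nonneg (hn0 s) (hP0 s t)
    have h1 : -(∑ s, n s * P s t) ≤ ∑ s, ρ s * P s t := by
      rw [← Finset.sum_neg_distrib]
      apply Finset.sum_le_sum
      intro s _
      have := mul_le_mul_of_nonneg_right (hnρ s) (hP0 s t)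
      linarith [this]
    have h2 : -(γ * ∑ s, n s * P s t) ≤ ρ t := by
      rw [hρ t]
      have := mul_le_mul_of_nonneg_left h1 hγ0
      have hct := hc t
      nlinarith
    exact max_le (by linarith) (mul_nonneg hγ0 hSnn)
  have hsum : ∑ t, n t ≤ γ * ∑ t, n t := by
    calc ∑ t, n t ≤ ∑ t, γ * ∑ s, n s * P s t := Finset.sum_le_sum fun t _ => key t
      _ = γ * ∑ t, ∑ s, n s * P s t := by rw [Finset.mul_sum]
      _ = γ * ∑ s, n s * ∑ t, P s t := by rw [Finset.sum_comm]; simp [Finset.mul_sum]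
      _ = γ * ∑ s, n s := by simp [hP1]
  have h2 : 0 ≤ ∑ t, n t := Finset.sum_nonneg fun t _ => hn0 t
  have h3 : ∑ t, n t = 0 := by nlinarith
  intro s
  have := (Finset.sum_eq_zero_iff_of_nonneg (fun t _ => hn0 t)).mp h3 s (mem_univ s)
  have : max (-ρ s) 0 = 0 := this
  have : -ρ s ≤ 0 := by
    by_contra h
    push_neg at h
    rw [max_eq_left h.le] at this
    linarith
  linarith

lemma mdp_fp_diff {S : Type*} [Fintype S] (P P' : S → S → ℝ)
    (hP0 : ∀ s t, 0 ≤ P s t) (hP1 : ∀ s, ∑ t, P s t = 1)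
    (γ : ℝ) (hγ0 : 0 ≤ γ) (hγ1 : γ < 1) (c : S → ℝ)
    (ρ ρ' : S → ℝ) (hρ'0 : ∀ s, 0 ≤ ρ' s)
    (hρ : ∀ t, ρ t = c t + γ * ∑ s, ρ s * P s t)
    (hρ' : ∀ t, ρ' t = c t + γ * ∑ s, ρ' s * P' s t) :
    (1 - γ) * ∑ s, |ρ s - ρ' s| ≤ γ * ∑ s, ρ' s * ∑ t, |P s t - P' s t| := by
  have hdiff : ∀ t, ρ t - ρ' t
      = γ * ((∑ s, (ρ s - ρ' s) * P s t) + ∑ s, ρ' s * (P s t - P' s t)) := by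
    intro t
    rw [hρ t, hρ' t]
    have : (∑ s, (ρ s - ρ' s) * P s t) + ∑ s, ρ' s * (P s t - P' s t)
        = ∑ s, ((ρ s - ρ' s) * P s t + ρ' s * (P s t - P' s t)) := by
      rw [Finset.sum_add_distrib]
    rw [this]
    have : ∑ s, ((ρ s - ρ' s) * P s t + ρ' s * (P s t - P' s t))
        = ∑ s, (ρ s * P s t - ρ' s * P' s t) := by
      apply Finset.sum_congr rfl; intros; ring
    rw [this, Finset.sum_sub_distrib]
    ring
  have habs : ∀ t, |ρ t - ρ' t|
      ≤ γ * (|∑ s, (ρ s - ρ' s) * P s t| + ∑ s, ρ' s * |P s t - P' s t|) := by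
    intro t
    rw [hdiff t, abs_mul, abs_of_nonneg hγ0]
    apply mul_le_mul_of_nonneg_left _ hγ0
    refine (abs_add_le _ _).trans ?_
    gcongr
    refine (Finset.abs_sum_le_sum_abs _ _).trans ?_
    apply Finset.sum_le_sum; intro s _
    rw [abs_mul, abs_of_nonneg (hρ'0 s)]
  have hsum : ∑ t, |ρ t - ρ' t|
      ≤ γ * (∑ s, |ρ s - ρ' s| + ∑ s, ρ' s * ∑ t, |P s t - P' s t|) := by
    calc ∑ t, |ρ t - ρ' t|
        ≤ ∑ t, γ * (|∑ s, (ρ s - ρ' s) * P s t| + ∑ s, ρ' s * |P s t - P' s t|) :=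
          Finset.sum_le_sum fun t _ => habs t
      _ = γ * ((∑ t, |∑ s, (ρ s - ρ' s) * P s t|) + ∑ t, ∑ s, ρ' s * |P s t - P' s t|) := by
          rw [← Finset.sum_add_distrib, Finset.mul_sum]
      _ ≤ γ * ((∑ s, |ρ s - ρ' s|) + ∑ s, ρ' s * ∑ t, |P s t - P' s t|) := by
          apply mul_le_mul_of_nonneg_left _ hγ0
          apply add_le_add (mdp_l1_step _ P hP0 hP1)
          apply le_of_eq
          rw [Finset.sum_comm]
          apply Finset.sum_congr rfl; intros
          rw [Finset.mul_sum]
  nlinarith [hsum]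

lemma mdp_perf_diff {S : Type*} [Fintype S] (P : S → S → ℝ) (γ : ℝ) (c g W ρ : S → ℝ)
    (hρ : ∀ t, ρ t = c t + γ * ∑ s, ρ s * P s t)
    (hW : ∀ s, W s = g s + γ * ∑ t, P s t * W t) :
    ∑ s, c s * W s = ∑ s, ρ s * g s := by
  have h1 : ∑ s, ρ s * g s = (∑ s, ρ s * W s) - ∑ t, (γ * ∑ s, ρ s * P s t) * W t := by
    have : ∀ s, ρ s * g s = ρ s * W s - γ * ∑ t, ρ s * (P s t * W t) := by
      intro s
      have e1 : γ * ∑ t, ρ s * (P s t * W t) = ρ s * (γ * ∑ t, P s t * W t) := by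
        rw [Finset.mul_sum, Finset.mul_sum, Finset.mul_sum]
        apply Finset.sum_congr rfl; intros; ring
      rw [e1, hW s]; ring
    rw [Finset.sum_congr rfl fun s _ => this s, Finset.sum_sub_distrib]
    congr 1
    rw [show (∑ x, γ * ∑ t, ρ x * (P x t * W t)) = ∑ x, ∑ t, γ * (ρ x * (P x t * W t)) by
      apply Finset.sum_congr rfl; intros; rw [Finset.mul_sum]]
    rw [Finset.sum_comm]
    apply Finset.sum_congr rfl; intro t _
    rw [Finset.mul_sum, Finset.sum_mul]
    apply Finset.sum_congr rfl; intros; ring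
  rw [h1]
  have h2 : ∀ t, (γ * ∑ s, ρ s * P s t) * W t = (ρ t - c t) * W t := by
    intro t
    rw [hρ t]; ring
  rw [Finset.sum_congr rfl fun t _ => h2 t]
  rw [show (∑ t, (ρ t - c t) * W t) = (∑ t, ρ t * W t) - ∑ t, c t * W t by
    rw [← Finset.sum_sub_distrib]; apply Finset.sum_congr rfl; intros; ring]
  ring

/-- Theorem 3: offline monotonic improvement bound over an updated policy `π_k`. -/
theorem offline_improvement_bound_updated
    {S A : Type*} [Fintype S] [Fintype A] [Nonempty S] [Nonempty A]
    -- transition kernel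
    (p : S → A → S → ℝ)
    (hp0 : ∀ s a s', 0 ≤ p s a s') (hp1 : ∀ s a, ∑ s', p s a s' = 1)
    -- discount factor
    (γ : ℝ) (hγ0 : 0 ≤ γ) (hγ1 : γ < 1)
    -- initial state distribution
    (d0 : S → ℝ) (hd00 : ∀ s, 0 ≤ d0 s) (hd01 : ∑ s, d0 s = 1)
    -- reward function
    (r : S → A → ℝ)
    -- policies: target π, updated πk, estimated behavior π̂β, dataset policy π_D
    (π πk πβ πD : S → A → ℝ)
    (hπ0 : ∀ s a, 0 ≤ π s a) (hπ1 : ∀ s, ∑ a, π s a = 1)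
    (hπk0 : ∀ s a, 0 ≤ πk s a) (hπk1 : ∀ s, ∑ a, πk s a = 1)
    (hπβ0 : ∀ s a, 0 ≤ πβ s a) (hπβ1 : ∀ s, ∑ a, πβ s a = 1)
    (hπD0 : ∀ s a, 0 ≤ πD s a) (hπD1 : ∀ s, ∑ a, πD s a = 1)
    -- value functions of π and πk (Bellman equations)
    (V Vk : S → ℝ)
    (hV : ∀ s, V s = ∑ a, π s a * (r s a + γ * ∑ s', p s a s' * V s'))
    (hVk : ∀ s, Vk s = ∑ a, πk s a * (r s a + γ * ∑ s', p s a s' * Vk s'))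
    -- discounted visitation frequencies of πk, π̂β and of the dataset policy π_D
    (ρk ρβ ρD : S → ℝ)
    (hρk : ∀ s', ρk s' = d0 s' + γ * ∑ s, ρk s * (∑ a, πk s a * p s a s'))
    (hρβ : ∀ s', ρβ s' = d0 s' + γ * ∑ s, ρβ s * (∑ a, πβ s a * p s a s'))
    (hρD : ∀ s', ρD s' = d0 s' + γ * ∑ s, ρD s * (∑ a, πD s a * p s a s')) :
    (∑ s, d0 s * V s) - (∑ s, d0 s * Vk s)
      ≥ (∑ s, ρD s * ∑ a, π s a * ((r s a + γ * ∑ s', p s a s' * Vk s') - Vk s))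
        - (4 * γ / (1 - γ))
            * (univ.sup' univ_nonempty fun sa : S × A =>
                |(r sa.1 sa.2 + γ * ∑ s', p sa.1 sa.2 s' * Vk s') - Vk sa.1|)
            * (univ.sup' univ_nonempty fun s =>
                (1 / 2) * ∑ a, |π s a - πk s a|)
            * ((∑ s, ρk s * ((1 / 2) * ∑ a, |π s a - πk s a|))
                + (∑ s, ρβ s * ((1 / 2) * ∑ a, |πk s a - πβ s a|))
                + (∑ s, ρD s * ((1 / 2) * ∑ a, |πβ s a - πD s a|))) := by

  classical
  have h1γ : (0:ℝ) < 1 - γ := by linarith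
  -- row-stochastic structure of induced transition matrices
  have hmk : ∀ (q : S → A → ℝ), (∀ s a, 0 ≤ q s a) → (∀ s, ∑ a, q s a = 1) →
      (∀ s t, 0 ≤ ∑ a, q s a * p s a t) ∧ (∀ s : S, ∑ t, ∑ a, q s a * p s a t = 1) := by
    intro q hq0 hq1
    refine ⟨fun s t => Finset.sum_nonneg fun a _ => mul_nonneg (hq0 s a) (hp0 s a t), fun s => ?_⟩
    rw [Finset.sum_comm]
    calc ∑ a, ∑ t, q s a * p s a t = ∑ a, q s a * ∑ t, p s a t := by
          apply Finset.sum_congr rfl; intros; rw [Finset.mul_sum]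
      _ = 1 := by simp only [hp1]; simpa using hq1 s
  obtain ⟨hPπ0, hPπ1⟩ := hmk π hπ0 hπ1
  obtain ⟨hPk0, hPk1⟩ := hmk πk hπk0 hπk1
  obtain ⟨hPβ0, hPβ1⟩ := hmk πβ hπβ0 hπβ1
  obtain ⟨hPD0, hPD1⟩ := hmk πD hπD0 hπD1
  -- existence of visitation frequency of π
  obtain ⟨ρπ, hρπ⟩ := mdp_fp_exists (fun s t => ∑ a, π s a * p s a t) hPπ0 hPπ1 γ hγ0 hγ1 d0
  -- nonnegativity of visitation frequencies
  have hρk0 : ∀ s, 0 ≤ ρk s :=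
    mdp_fp_nonneg (fun s t => ∑ a, πk s a * p s a t) hPk0 hPk1 γ hγ0 hγ1 d0 hd00 ρk hρk
  have hρβ0 : ∀ s, 0 ≤ ρβ s :=
    mdp_fp_nonneg (fun s t => ∑ a, πβ s a * p s a t) hPβ0 hPβ1 γ hγ0 hγ1 d0 hd00 ρβ hρβ
  have hρD0 : ∀ s, 0 ≤ ρD s :=
    mdp_fp_nonneg (fun s t => ∑ a, πD s a * p s a t) hPD0 hPD1 γ hγ0 hγ1 d0 hd00 ρD hρD
  -- the expected advantage function
  set g : S → ℝ := fun s => ∑ a, π s a * ((r s a + γ * ∑ s', p s a s' * Vk s') - Vk s) with hg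
  -- recursion for W = V - Vk
  have hsplit : ∀ (q : S → A → ℝ) (s : S), (∀ s, ∑ a, q s a = 1) → ∀ X : A → ℝ,
      ∑ a, q s a * (X a - Vk s) = (∑ a, q s a * X a) - Vk s := by
    intro q s hq1 X
    calc ∑ a, q s a * (X a - Vk s) = ∑ a, (q s a * X a - q s a * Vk s) := by
          apply Finset.sum_congr rfl; intros; ring
      _ = (∑ a, q s a * X a) - (∑ a, q s a) * Vk s := by
          rw [Finset.sum_sub_distrib, Finset.sum_mul]
      _ = (∑ a, q s a * X a) - Vk s := by rw [hq1 s]; ring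
  have hW : ∀ s, V s - Vk s = g s + γ * ∑ t, (∑ a, π s a * p s a t) * (V t - Vk t) := by
    intro s
    have swap : ∑ t, (∑ a, π s a * p s a t) * (V t - Vk t)
        = ∑ a, π s a * ∑ t, p s a t * (V t - Vk t) := by
      rw [show (∑ t, (∑ a, π s a * p s a t) * (V t - Vk t))
          = ∑ t, ∑ a, π s a * (p s a t * (V t - Vk t)) by
        apply Finset.sum_congr rfl; intro t _; rw [Finset.sum_mul]
        apply Finset.sum_congr rfl; intros; ring]
      rw [Finset.sum_comm]
      apply Finset.sum_congr rfl; intros; rw [Finset.mul_sum]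
    rw [swap, hV s]
    have e1 : γ * ∑ a, π s a * ∑ t, p s a t * (V t - Vk t)
        = (∑ a, π s a * (γ * ∑ t, p s a t * V t))
          - ∑ a, π s a * (γ * ∑ t, p s a t * Vk t) := by
      rw [← Finset.sum_sub_distrib, Finset.mul_sum]
      apply Finset.sum_congr rfl; intro a _
      have : ∑ t, p s a t * (V t - Vk t) = (∑ t, p s a t * V t) - ∑ t, p s a t * Vk t := by
        rw [← Finset.sum_sub_distrib]; apply Finset.sum_congr rfl; intros; ring
      rw [this]; ring
    rw [e1, show g s = ∑ a, π s a * ((r s a + γ * ∑ s', p s a s' * Vk s') - Vk s) from rfl]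
    rw [hsplit π s hπ1 (fun a => r s a + γ * ∑ s', p s a s' * Vk s')]
    have e3 : ∑ a, π s a * (r s a + γ * ∑ t, p s a t * V t)
        = (∑ a, π s a * (r s a + γ * ∑ t, p s a t * Vk t))
          + ((∑ a, π s a * (γ * ∑ t, p s a t * V t))
            - ∑ a, π s a * (γ * ∑ t, p s a t * Vk t)) := by
      rw [← Finset.sum_sub_distrib, ← Finset.sum_add_distrib]
      apply Finset.sum_congr rfl; intros; ring
    rw [e3]; ring
  -- performance difference identity
  have hJ : (∑ s, d0 s * V s) - (∑ s, d0 s * Vk s) = ∑ s, ρπ s * g s := by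
    rw [← mdp_perf_diff (fun s t => ∑ a, π s a * p s a t) γ d0 g
      (fun s => V s - Vk s) ρπ hρπ hW]
    rw [← Finset.sum_sub_distrib]
    apply Finset.sum_congr rfl; intros; ring
  -- bounds on the advantage magnitude
  set 𝔸 : ℝ := univ.sup' univ_nonempty fun sa : S × A =>
      |(r sa.1 sa.2 + γ * ∑ s', p sa.1 sa.2 s' * Vk s') - Vk sa.1| with h𝔸
  set ε : ℝ := univ.sup' univ_nonempty fun s => (1 / 2) * ∑ a, |π s a - πk s a| with hε
  have h𝔸b : ∀ s a, |(r s a + γ * ∑ s', p s a s' * Vk s') - Vk s| ≤ 𝔸 := fun s a =>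
    Finset.le_sup' (f := fun sa : S × A =>
      |(r sa.1 sa.2 + γ * ∑ s', p sa.1 sa.2 s' * Vk s') - Vk sa.1|) (Finset.mem_univ (s, a))
  have h𝔸0 : 0 ≤ 𝔸 := le_trans (abs_nonneg _)
    (h𝔸b (Classical.arbitrary S) (Classical.arbitrary A))
  have hεb : ∀ s, (1 / 2) * ∑ a, |π s a - πk s a| ≤ ε := fun s =>
    Finset.le_sup' (f := fun s => (1 / 2) * ∑ a, |π s a - πk s a|) (Finset.mem_univ s)
  have hε0 : 0 ≤ ε := le_trans (by positivity : (0:ℝ) ≤ (1/2) * ∑ a, |π (Classical.arbitrary S) a - πk (Classical.arbitrary S) a|) (hεb _)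
  -- πk has zero expected advantage
  have hg0 : ∀ s, ∑ a, πk s a * ((r s a + γ * ∑ s', p s a s' * Vk s') - Vk s) = 0 := by
    intro s
    rw [hsplit πk s hπk1 (fun a => r s a + γ * ∑ s', p s a s' * Vk s'), ← hVk s]
    ring
  -- bound on |g s|
  have hgK : ∀ s, |g s| ≤ 2 * 𝔸 * ε := by
    intro s
    have e : g s = ∑ a, (π s a - πk s a) * ((r s a + γ * ∑ s', p s a s' * Vk s') - Vk s) := by
      rw [show g s = ∑ a, π s a * ((r s a + γ * ∑ s', p s a s' * Vk s') - Vk s) from rfl]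
      rw [show (∑ a, (π s a - πk s a) * ((r s a + γ * ∑ s', p s a s' * Vk s') - Vk s))
          = (∑ a, π s a * ((r s a + γ * ∑ s', p s a s' * Vk s') - Vk s))
            - ∑ a, πk s a * ((r s a + γ * ∑ s', p s a s' * Vk s') - Vk s) by
        rw [← Finset.sum_sub_distrib]; apply Finset.sum_congr rfl; intros; ring]
      rw [hg0 s]; ring
    rw [e]
    calc |∑ a, (π s a - πk s a) * ((r s a + γ * ∑ s', p s a s' * Vk s') - Vk s)|
        ≤ ∑ a, |π s a - πk s a| * 𝔸 := by
          refine (Finset.abs_sum_le_sum_abs _ _).trans ?_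
          apply Finset.sum_le_sum; intro a _
          rw [abs_mul]
          exact mul_le_mul_of_nonneg_left (h𝔸b s a) (abs_nonneg _)
      _ = 2 * 𝔸 * ((1/2) * ∑ a, |π s a - πk s a|) := by rw [← Finset.sum_mul]; ring
      _ ≤ 2 * 𝔸 * ε := by
          apply mul_le_mul_of_nonneg_left (hεb s); positivity
  -- main estimation step
  have hmain : (∑ s, ρD s * g s) - ∑ s, ρπ s * g s
      ≤ (2 * 𝔸 * ε) * ∑ s, |ρπ s - ρD s| := by
    rw [← Finset.sum_sub_distrib]
    calc ∑ s, (ρD s * g s - ρπ s * g s)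
        ≤ ∑ s, |ρD s * g s - ρπ s * g s| := Finset.sum_le_sum fun s _ => le_abs_self _
      _ = ∑ s, |ρπ s - ρD s| * |g s| := by
          apply Finset.sum_congr rfl; intro s _
          rw [show ρD s * g s - ρπ s * g s = (ρD s - ρπ s) * g s by ring, abs_mul,
            abs_sub_comm]
      _ ≤ ∑ s, |ρπ s - ρD s| * (2 * 𝔸 * ε) :=
          Finset.sum_le_sum fun s _ => mul_le_mul_of_nonneg_left (hgK s) (abs_nonneg _)
      _ = (2 * 𝔸 * ε) * ∑ s, |ρπ s - ρD s| := by
          rw [Finset.mul_sum]; apply Finset.sum_congr rfl; intros; ring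
  -- ℓ¹ bounds between visitation frequencies
  have hrow : ∀ (q q' : S → A → ℝ) (s : S),
      ∑ t, |(∑ a, q s a * p s a t) - ∑ a, q' s a * p s a t| ≤ ∑ a, |q s a - q' s a| := by
    intro q q' s
    have := mdp_l1_step (fun a => q s a - q' s a) (fun a t => p s a t)
      (fun a t => hp0 s a t) (fun a => hp1 s a)
    refine le_trans (le_of_eq ?_) this
    apply Finset.sum_congr rfl; intro t _
    congr 1
    rw [← Finset.sum_sub_distrib]
    apply Finset.sum_congr rfl; intros; ring
  have hfd : ∀ (q q' : S → A → ℝ) (hq0 : ∀ s a, 0 ≤ q s a) (hq1 : ∀ s, ∑ a, q s a = 1)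
      (hq'0 : ∀ s a, 0 ≤ q' s a) (hq'1 : ∀ s, ∑ a, q' s a = 1) (ρ ρ' : S → ℝ)
      (hρ'0 : ∀ s, 0 ≤ ρ' s)
      (h1 : ∀ t, ρ t = d0 t + γ * ∑ s, ρ s * (∑ a, q s a * p s a t))
      (h2 : ∀ t, ρ' t = d0 t + γ * ∑ s, ρ' s * (∑ a, q' s a * p s a t)),
      (1 - γ) * ∑ s, |ρ s - ρ' s| ≤ 2 * γ * ∑ s, ρ' s * ((1/2) * ∑ a, |q s a - q' s a|) := by
    intro q q' hq0 hq1 hq'0 hq'1 ρ ρ' hρ'0 h1 h2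
    obtain ⟨hQ0, hQ1⟩ := hmk q hq0 hq1
    have base := mdp_fp_diff (fun s t => ∑ a, q s a * p s a t)
      (fun s t => ∑ a, q' s a * p s a t) hQ0 hQ1 γ hγ0 hγ1 d0 ρ ρ' hρ'0 h1 h2
    calc (1 - γ) * ∑ s, |ρ s - ρ' s|
        ≤ γ * ∑ s, ρ' s * ∑ t, |(∑ a, q s a * p s a t) - ∑ a, q' s a * p s a t| := base
      _ ≤ γ * ∑ s, ρ' s * ∑ a, |q s a - q' s a| := by
          apply mul_le_mul_of_nonneg_left _ hγ0
          exact Finset.sum_le_sum fun s _ =>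
            mul_le_mul_of_nonneg_left (hrow q q' s) (hρ'0 s)
      _ = 2 * γ * ∑ s, ρ' s * ((1/2) * ∑ a, |q s a - q' s a|) := by
          rw [Finset.mul_sum, Finset.mul_sum]
          apply Finset.sum_congr rfl; intros; ring
  have hd1 := hfd π πk hπ0 hπ1 hπk0 hπk1 ρπ ρk hρk0 hρπ hρk
  have hd2 := hfd πk πβ hπk0 hπk1 hπβ0 hπβ1 ρk ρβ hρβ0 hρk hρβ
  have hd3 := hfd πβ πD hπβ0 hπβ1 hπD0 hπD1 ρβ ρD hρD0 hρβ hρD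
  -- triangle inequality for the total variation of visitation frequencies
  have htri : ∑ s, |ρπ s - ρD s|
      ≤ (∑ s, |ρπ s - ρk s|) + (∑ s, |ρk s - ρβ s|) + ∑ s, |ρβ s - ρD s| := by
    rw [← Finset.sum_add_distrib, ← Finset.sum_add_distrib]
    apply Finset.sum_le_sum; intro s _
    calc |ρπ s - ρD s| = |(ρπ s - ρk s) + (ρk s - ρβ s) + (ρβ s - ρD s)| := by ring_nf
      _ ≤ _ := by
        refine (abs_add_le _ _).trans ?_
        exact add_le_add (abs_add_le _ _) le_rfl
  -- put everything together
  set T1 := ∑ s, ρk s * ((1 / 2) * ∑ a, |π s a - πk s a|) with hT1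
  set T2 := ∑ s, ρβ s * ((1 / 2) * ∑ a, |πk s a - πβ s a|) with hT2
  set T3 := ∑ s, ρD s * ((1 / 2) * ∑ a, |πβ s a - πD s a|) with hT3
  set D := ∑ s, |ρπ s - ρD s| with hD
  have hDsum : (1 - γ) * D ≤ 2 * γ * (T1 + T2 + T3) := by
    have := mul_le_mul_of_nonneg_left htri (le_of_lt h1γ)
    nlinarith [hd1, hd2, hd3]
  have hK0 : (0:ℝ) ≤ 2 * 𝔸 * ε := by positivity
  have hfin : (2 * 𝔸 * ε) * D ≤ 4 * γ / (1 - γ) * 𝔸 * ε * (T1 + T2 + T3) := by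
    rw [div_mul_eq_mul_div, div_mul_eq_mul_div, div_mul_eq_mul_div,
      le_div_iff₀ h1γ]
    nlinarith [mul_le_mul_of_nonneg_left hDsum hK0]
  have hgoal : (∑ s, ρD s * ∑ a, π s a * ((r s a + γ * ∑ s', p s a s' * Vk s') - Vk s))
      = ∑ s, ρD s * g s := rfl
  rw [ge_iff_le, hgoal]
  linarith [hmain, hfin]
end

section
/- (Value difference bound between two policies.) Suppose the reward depends only on the state and |r(s)| ≤ R_max for all s. For any two policies π and π' and every state s, |V_π(s) − V_{π'}(s)| ≤ (2γ/(1−γ)) · R_max · Σ_{s'} ρ_{π'}^{(s)}(s') · D_TV(π‖π')[s'], where ρ_{π'}^{(s)} is the discounted visitation frequency of π' started from s. -/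
open Finset

/-- Value difference bound between two policies (state-only bounded reward):
`|V_π(s) − V_{π'}(s)| ≤ (2γ/(1−γ)) · R_max · Σ_{s'} ρ_{π'}^{(s)}(s') · D_TV(π‖π')[s']`. -/
theorem value_difference_bound
    {S A : Type*} [Fintype S] [DecidableEq S] [Fintype A] [Nonempty S] [Nonempty A]
    -- transition kernel
    (p : S → A → S → ℝ)
    (hp0 : ∀ s a s', 0 ≤ p s a s') (hp1 : ∀ s a, ∑ s', p s a s' = 1)
    -- discount factor
    (γ : ℝ) (hγ0 : 0 ≤ γ) (hγ1 : γ < 1)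
    -- state-only bounded reward
    (r : S → ℝ) (Rmax : ℝ) (hr : ∀ s, |r s| ≤ Rmax)
    -- the two policies
    (π π' : S → A → ℝ)
    (hπ0 : ∀ s a, 0 ≤ π s a) (hπ1 : ∀ s, ∑ a, π s a = 1)
    (hπ'0 : ∀ s a, 0 ≤ π' s a) (hπ'1 : ∀ s, ∑ a, π' s a = 1)
    -- value functions of π and π' (Bellman equations)
    (V V' : S → ℝ)
    (hV : ∀ s, V s = r s + γ * ∑ s', (∑ a, π s a * p s a s') * V s')
    (hV' : ∀ s, V' s = r s + γ * ∑ s', (∑ a, π' s a * p s a s') * V' s')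
    -- discounted visitation frequency of π' started from each state
    (ρ' : S → S → ℝ)
    (hρ' : ∀ s u, ρ' s u = (if u = s then (1 : ℝ) else 0)
            + γ * ∑ s'', ρ' s s'' * (∑ a, π' s'' a * p s'' a u))
    (s : S) :
    |V s - V' s|
      ≤ (2 * γ / (1 - γ)) * Rmax
          * ∑ s', ρ' s s' * ((1 / 2) * ∑ a, |π s' a - π' s' a|) := by
  have hγ1' : (0:ℝ) < 1 - γ := by linarith
  have hRnn : 0 ≤ Rmax := le_trans (abs_nonneg _) (hr s)
  set P : S → S → ℝ := fun u v => ∑ a, π' u a * p u a v with hP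
  have hPnn : ∀ u v, 0 ≤ P u v := fun u v =>
    Finset.sum_nonneg fun a _ => mul_nonneg (hπ'0 u a) (hp0 u a v)
  have hProw : ∀ u, ∑ v, P u v = 1 := by
    intro u
    calc ∑ v, ∑ a, π' u a * p u a v = ∑ a, ∑ v, π' u a * p u a v := Finset.sum_comm
      _ = ∑ a, π' u a * ∑ v, p u a v := by simp [Finset.mul_sum]
      _ = 1 := by simp [hp1, hπ'1]
  -- π transition matrix row sums
  have hQrow : ∀ u, ∑ v, (∑ a, π u a * p u a v) = 1 := by
    intro u
    calc ∑ v, ∑ a, π u a * p u a v = ∑ a, ∑ v, π u a * p u a v := Finset.sum_comm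
      _ = ∑ a, π u a * ∑ v, p u a v := by simp [Finset.mul_sum]
      _ = 1 := by simp [hp1, hπ1]
  -- nonnegativity of ρ'
  have hρnn : ∀ u, 0 ≤ ρ' s u := by
    set f : S → ℝ := fun u => max (-(ρ' s u)) 0 with hf
    have hfnn : ∀ u, 0 ≤ f u := fun u => le_max_right _ _
    have hkey : ∀ u, f u ≤ γ * ∑ s'', f s'' * P s'' u := by
      intro u
      have hterm : ∀ s'', (-(f s'')) * P s'' u ≤ ρ' s s'' * P s'' u := by
        intro s''
        exact mul_le_mul_of_nonneg_right (neg_le.mpr (le_max_left _ _)) (hPnn s'' u)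
      have hsum : γ * ∑ s'', (-(f s'')) * P s'' u ≤ γ * ∑ s'', ρ' s s'' * P s'' u :=
        mul_le_mul_of_nonneg_left (Finset.sum_le_sum fun i _ => hterm i) hγ0
      have hneg : -(ρ' s u) ≤ γ * ∑ s'', f s'' * P s'' u := by
        rw [hρ' s u]
        have h2 : γ * ∑ s'', (-(f s'')) * P s'' u = -(γ * ∑ s'', f s'' * P s'' u) := by
          simp [neg_mul, mul_neg]
        have h3 : (0:ℝ) ≤ (if u = s then (1:ℝ) else 0) := by positivity
        nlinarith [hsum]
      have hnn : (0:ℝ) ≤ γ * ∑ s'', f s'' * P s'' u :=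
        mul_nonneg hγ0 (Finset.sum_nonneg fun i _ => mul_nonneg (hfnn i) (hPnn i u))
      exact max_le hneg hnn
    have hsumf : ∑ u, f u ≤ γ * ∑ u, f u := by
      calc ∑ u, f u ≤ ∑ u, γ * ∑ s'', f s'' * P s'' u :=
            Finset.sum_le_sum fun u _ => hkey u
        _ = γ * ∑ s'', f s'' * ∑ u, P s'' u := by
            rw [← Finset.mul_sum, Finset.sum_comm]
            congr 1
            apply Finset.sum_congr rfl
            intro i _
            rw [Finset.mul_sum]
        _ = γ * ∑ u, f u := by simp [hProw]
    have hzero : ∑ u, f u = 0 := by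
      have h0 : 0 ≤ ∑ u, f u := Finset.sum_nonneg fun u _ => hfnn u
      nlinarith
    intro u
    have hfu : f u = 0 :=
      (Finset.sum_eq_zero_iff_of_nonneg (fun u _ => hfnn u)).mp hzero u (mem_univ u)
    have h2 : -(ρ' s u) ≤ f u := le_max_left _ _
    rw [hfu] at h2
    linarith
  -- bound on |V|
  have hVb : ∀ u, |V u| ≤ Rmax / (1 - γ) := by
    obtain ⟨u0, -, hu0⟩ := Finset.exists_max_image (univ : Finset S) (fun u => |V u|)
      univ_nonempty
    have hmax : ∀ u, |V u| ≤ |V u0| := fun u => hu0 u (mem_univ u)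
    have hb : |V u0| ≤ Rmax + γ * |V u0| := by
      calc |V u0| = |r u0 + γ * ∑ s', (∑ a, π u0 a * p u0 a s') * V s'| := by rw [← hV u0]
        _ ≤ |r u0| + |γ * ∑ s', (∑ a, π u0 a * p u0 a s') * V s'| := abs_add_le _ _
        _ ≤ Rmax + γ * |∑ s', (∑ a, π u0 a * p u0 a s') * V s'| := by
            rw [abs_mul, abs_of_nonneg hγ0]
            exact add_le_add_left (hr u0) _
        _ ≤ Rmax + γ * ∑ s', (∑ a, π u0 a * p u0 a s') * |V u0| := by
            gcongr
            calc |∑ s', (∑ a, π u0 a * p u0 a s') * V s'|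
                ≤ ∑ s', |(∑ a, π u0 a * p u0 a s') * V s'| := Finset.abs_sum_le_sum_abs _ _
              _ ≤ ∑ s', (∑ a, π u0 a * p u0 a s') * |V u0| := by
                  apply Finset.sum_le_sum
                  intro v _
                  rw [abs_mul]
                  have hq : 0 ≤ ∑ a, π u0 a * p u0 a v :=
                    Finset.sum_nonneg fun a _ => mul_nonneg (hπ0 u0 a) (hp0 u0 a v)
                  rw [abs_of_nonneg hq]
                  exact mul_le_mul_of_nonneg_left (hmax v) hq
        _ = Rmax + γ * |V u0| := by rw [← Finset.sum_mul, hQrow u0, one_mul]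
    have hb0 : |V u0| ≤ Rmax / (1 - γ) := by
      rw [le_div_iff₀ hγ1']
      nlinarith
    exact fun u => le_trans (hmax u) hb0
  -- advantage-like term
  set g : S → ℝ := fun u => γ * ∑ s', (∑ a, (π u a - π' u a) * p u a s') * V s' with hg
  -- Bellman equation for the difference
  have hbellman : ∀ u, V u - V' u = g u + γ * ∑ s', P u s' * (V s' - V' s') := by
    intro u
    have hgu : g u = γ * ∑ s', (∑ a, (π u a - π' u a) * p u a s') * V s' := rfl
    rw [hV u, hV' u, hgu]
    have hsplit : (∑ s', (∑ a, π u a * p u a s') * V s')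
        - (∑ s', (∑ a, π' u a * p u a s') * V' s')
        = (∑ s', (∑ a, (π u a - π' u a) * p u a s') * V s')
          + ∑ s', P u s' * (V s' - V' s') := by
      rw [← Finset.sum_sub_distrib, ← Finset.sum_add_distrib]
      apply Finset.sum_congr rfl
      intro v _
      have hd : ∑ a, (π u a - π' u a) * p u a v
          = (∑ a, π u a * p u a v) - ∑ a, π' u a * p u a v := by
        rw [← Finset.sum_sub_distrib]
        apply Finset.sum_congr rfl
        intros; ring
      rw [hd]
      simp only [hP]
      ring
    have h4 : γ * (∑ s', (∑ a, π u a * p u a s') * V s')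
        - γ * ∑ s', (∑ a, π' u a * p u a s') * V' s'
        = γ * (∑ s', (∑ a, (π u a - π' u a) * p u a s') * V s')
          + γ * ∑ s', P u s' * (V s' - V' s') := by
      rw [← mul_sub, hsplit]; ring
    linarith [h4]
  -- representation of the difference through ρ'
  have hrep : V s - V' s = ∑ u, ρ' s u * g u := by
    have h1 : ∀ u, g u = (V u - V' u) - γ * ∑ s', P u s' * (V s' - V' s') := by
      intro u; have := hbellman u; linarith
    have hρP : ∀ v, γ * ∑ u, ρ' s u * P u v = ρ' s v - (if v = s then (1:ℝ) else 0) := by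
      intro v
      have := hρ' s v
      simp only [hP]
      linarith [this]
    have hpt : ∀ u, ρ' s u * g u = ρ' s u * (V u - V' u)
        - ∑ v, γ * (ρ' s u * (P u v * (V v - V' v))) := by
      intro u
      rw [h1 u, mul_sub, Finset.mul_sum, Finset.mul_sum]
      congr 1
      apply Finset.sum_congr rfl
      intros; ring
    symm
    calc ∑ u, ρ' s u * g u
        = ∑ u, (ρ' s u * (V u - V' u)
            - ∑ v, γ * (ρ' s u * (P u v * (V v - V' v)))) :=
          Finset.sum_congr rfl fun u _ => hpt u
      _ = (∑ u, ρ' s u * (V u - V' u))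
            - ∑ v, (γ * ∑ u, ρ' s u * P u v) * (V v - V' v) := by
          rw [Finset.sum_sub_distrib]
          congr 1
          rw [Finset.sum_comm]
          apply Finset.sum_congr rfl
          intro v _
          rw [Finset.mul_sum, Finset.sum_mul]
          apply Finset.sum_congr rfl
          intros; ring
      _ = (∑ u, ρ' s u * (V u - V' u))
            - ∑ v, (ρ' s v - (if v = s then (1:ℝ) else 0)) * (V v - V' v) := by
          congr 1
          apply Finset.sum_congr rfl
          intro v _
          rw [hρP v]
      _ = ∑ v, (if v = s then (1:ℝ) else 0) * (V v - V' v) := by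
          rw [← Finset.sum_sub_distrib]
          apply Finset.sum_congr rfl
          intros; ring
      _ = V s - V' s := by simp
  -- bound on |g|
  have hgb : ∀ u, |g u| ≤ (2 * γ / (1 - γ)) * Rmax * ((1/2) * ∑ a, |π u a - π' u a|) := by
    intro u
    have hswap : ∑ s', (∑ a, (π u a - π' u a) * p u a s') * V s'
        = ∑ a, (π u a - π' u a) * ∑ s', p u a s' * V s' := by
      calc ∑ s', (∑ a, (π u a - π' u a) * p u a s') * V s'
          = ∑ s', ∑ a, (π u a - π' u a) * p u a s' * V s' := by
            apply Finset.sum_congr rfl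
            intro v _
            rw [Finset.sum_mul]
        _ = ∑ a, ∑ s', (π u a - π' u a) * p u a s' * V s' := Finset.sum_comm
        _ = ∑ a, (π u a - π' u a) * ∑ s', p u a s' * V s' := by
            apply Finset.sum_congr rfl
            intro a _
            rw [Finset.mul_sum]
            apply Finset.sum_congr rfl
            intros; ring
    have hinner : ∀ a, |∑ s', p u a s' * V s'| ≤ Rmax / (1 - γ) := by
      intro a
      calc |∑ s', p u a s' * V s'| ≤ ∑ s', |p u a s' * V s'| := Finset.abs_sum_le_sum_abs _ _
        _ ≤ ∑ s', p u a s' * (Rmax / (1 - γ)) := by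
            apply Finset.sum_le_sum
            intro v _
            rw [abs_mul, abs_of_nonneg (hp0 u a v)]
            exact mul_le_mul_of_nonneg_left (hVb v) (hp0 u a v)
        _ = Rmax / (1 - γ) := by rw [← Finset.sum_mul, hp1 u a, one_mul]
    calc |g u| = γ * |∑ a, (π u a - π' u a) * ∑ s', p u a s' * V s'| := by
          rw [show g u = γ * ∑ s', (∑ a, (π u a - π' u a) * p u a s') * V s' from rfl,
            hswap, abs_mul, abs_of_nonneg hγ0]
      _ ≤ γ * ∑ a, |π u a - π' u a| * (Rmax / (1 - γ)) := by
          apply mul_le_mul_of_nonneg_left _ hγ0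
          calc |∑ a, (π u a - π' u a) * ∑ s', p u a s' * V s'|
              ≤ ∑ a, |(π u a - π' u a) * ∑ s', p u a s' * V s'| :=
                Finset.abs_sum_le_sum_abs _ _
            _ ≤ ∑ a, |π u a - π' u a| * (Rmax / (1 - γ)) := by
                apply Finset.sum_le_sum
                intro a _
                rw [abs_mul]
                exact mul_le_mul_of_nonneg_left (hinner a) (abs_nonneg _)
      _ = (2 * γ / (1 - γ)) * Rmax * ((1/2) * ∑ a, |π u a - π' u a|) := by
          rw [← Finset.sum_mul]
          field_simp
  -- final assembly
  calc |V s - V' s| = |∑ u, ρ' s u * g u| := by rw [hrep]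
    _ ≤ ∑ u, |ρ' s u * g u| := Finset.abs_sum_le_sum_abs _ _
    _ ≤ ∑ u, ρ' s u * ((2 * γ / (1 - γ)) * Rmax * ((1/2) * ∑ a, |π u a - π' u a|)) := by
        apply Finset.sum_le_sum
        intro u _
        rw [abs_mul, abs_of_nonneg (hρnn u)]
        exact mul_le_mul_of_nonneg_left (hgb u) (hρnn u)
    _ = (2 * γ / (1 - γ)) * Rmax * ∑ s', ρ' s s' * ((1/2) * ∑ a, |π s' a - π' s' a|) := by
        rw [Finset.mul_sum]
        apply Finset.sum_congr rfl
        intros; ring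
end

section
/- (Theorem 4, advantage replacement error bound.) Suppose the reward depends only on the state and |r(s)| ≤ R_max for all s. Let π, π_k and π_β be policies, and let Δ = max_s Σ_{s'} ρ_{π_β}^{(s)}(s') D_TV(π_k‖π_β)[s'], where ρ_{π_β}^{(s)} is the discounted visitation frequency of π_β started from s. Then for every probability mass function ρ on S, |Σ_s ρ(s) Σ_a π(a|s) (A_{π_k}(s,a) − A_{π_β}(s,a))| ≤ (2γ(γ+1)/(1−γ)) · R_max · Δ. -/
open Finset

lemma aux_value_bound {S : Type*} [Fintype S] [Nonempty S]
    (P : S → S → ℝ) (hP0 : ∀ s u, 0 ≤ P s u) (hP1 : ∀ s, ∑ u, P s u = 1)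
    (γ : ℝ) (hγ0 : 0 ≤ γ) (hγ1 : γ < 1)
    (r : S → ℝ) (Rmax : ℝ) (hr : ∀ s, |r s| ≤ Rmax)
    (V : S → ℝ) (hV : ∀ s, V s = r s + γ * ∑ u, P s u * V u) :
    ∀ s, |V s| ≤ Rmax / (1 - γ) := by
  have hγ' : 0 < 1 - γ := by linarith
  obtain ⟨s0, -, hs0⟩ := Finset.exists_max_image (Finset.univ : Finset S) (fun s => |V s|)
    ⟨Classical.arbitrary S, Finset.mem_univ _⟩
  have hs0' : ∀ s, |V s| ≤ |V s0| := fun s => hs0 s (Finset.mem_univ s)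
  have key : |V s0| ≤ Rmax + γ * |V s0| := by
    calc |V s0| = |r s0 + γ * ∑ u, P s0 u * V u| := by rw [← hV]
    _ ≤ |r s0| + |γ * ∑ u, P s0 u * V u| := abs_add_le _ _
    _ ≤ Rmax + γ * |∑ u, P s0 u * V u| := by
        rw [abs_mul, abs_of_nonneg hγ0]; exact add_le_add (hr s0) le_rfl
    _ ≤ Rmax + γ * ∑ u, P s0 u * |V s0| := by
        gcongr
        calc |∑ u, P s0 u * V u| ≤ ∑ u, |P s0 u * V u| := Finset.abs_sum_le_sum_abs _ _
        _ ≤ ∑ u, P s0 u * |V s0| := by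
            apply Finset.sum_le_sum; intro u _
            rw [abs_mul, abs_of_nonneg (hP0 s0 u)]
            exact mul_le_mul_of_nonneg_left (hs0' u) (hP0 s0 u)
    _ = Rmax + γ * |V s0| := by rw [← Finset.sum_mul, hP1, one_mul]
  intro s
  have h2 : |V s0| ≤ Rmax / (1 - γ) := by
    rw [le_div_iff₀ hγ']; nlinarith [key]
  exact le_trans (hs0' s) h2

lemma aux_rho_nonneg {S : Type*} [Fintype S] [DecidableEq S]
    (P : S → S → ℝ) (hP0 : ∀ s u, 0 ≤ P s u) (hP1 : ∀ s, ∑ u, P s u = 1)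
    (γ : ℝ) (hγ0 : 0 ≤ γ) (hγ1 : γ < 1)
    (s : S) (ρ : S → ℝ)
    (hρ : ∀ u, ρ u = (if u = s then (1:ℝ) else 0) + γ * ∑ v, ρ v * P v u) :
    ∀ u, 0 ≤ ρ u := by
  set τ : S → ℝ := fun u => max (-ρ u) 0 with hτ
  have hτ0 : ∀ u, 0 ≤ τ u := fun u => le_max_right _ _
  have key : ∀ u, τ u ≤ γ * ∑ v, τ v * P v u := by
    intro u
    have hnn : 0 ≤ γ * ∑ v, τ v * P v u :=
      mul_nonneg hγ0 (Finset.sum_nonneg fun v _ => mul_nonneg (hτ0 v) (hP0 v u))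
    refine max_le ?_ hnn
    rw [hρ u]
    have h1 : ∑ v, -(ρ v * P v u) ≤ ∑ v, τ v * P v u := by
      apply Finset.sum_le_sum; intro v _
      rw [neg_mul_eq_neg_mul]
      exact mul_le_mul_of_nonneg_right (le_max_left _ _) (hP0 v u)
    have h2 : (0:ℝ) ≤ (if u = s then (1:ℝ) else 0) := by positivity
    rw [Finset.sum_neg_distrib] at h1
    have h3 := mul_le_mul_of_nonneg_left h1 hγ0
    linarith
  have hsum : ∑ u, τ u ≤ γ * ∑ u, τ u := by
    calc ∑ u, τ u ≤ ∑ u, γ * ∑ v, τ v * P v u := Finset.sum_le_sum fun u _ => key u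
    _ = γ * ∑ u, ∑ v, τ v * P v u := by rw [Finset.mul_sum]
    _ = γ * ∑ v, ∑ u, τ v * P v u := by rw [Finset.sum_comm]
    _ = γ * ∑ v, τ v := by
        congr 1; apply Finset.sum_congr rfl; intro v _
        rw [← Finset.mul_sum, hP1, mul_one]
  have hzero : ∑ u, τ u = 0 := by
    have h0 : 0 ≤ ∑ u, τ u := Finset.sum_nonneg fun u _ => hτ0 u
    nlinarith
  intro u
  have ht : τ u = 0 :=
    (Finset.sum_eq_zero_iff_of_nonneg (fun u _ => hτ0 u)).mp hzero u (Finset.mem_univ u)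
  have hmem : -ρ u ≤ τ u := le_max_left _ _
  linarith [hmem, ht.le]


/-- Theorem 4: advantage replacement error bound. Replacing `A_{π_k}` by `A_{π_β}`
in the surrogate objective changes it by at most
`(2γ(γ+1)/(1−γ)) · R_max · Δ` where
`Δ = max_s Σ_{s'} ρ_{π_β}^{(s)}(s') D_TV(π_k‖π_β)[s']`. -/
theorem advantage_replacement_bound
    {S A : Type*} [Fintype S] [DecidableEq S] [Fintype A] [Nonempty S] [Nonempty A]
    -- transition kernel
    (p : S → A → S → ℝ)
    (hp0 : ∀ s a s', 0 ≤ p s a s') (hp1 : ∀ s a, ∑ s', p s a s' = 1)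
    -- discount factor
    (γ : ℝ) (hγ0 : 0 ≤ γ) (hγ1 : γ < 1)
    -- state-only bounded reward
    (r : S → ℝ) (Rmax : ℝ) (hr : ∀ s, |r s| ≤ Rmax)
    -- policies π, π_k, π_β
    (π πk πβ : S → A → ℝ)
    (hπ0 : ∀ s a, 0 ≤ π s a) (hπ1 : ∀ s, ∑ a, π s a = 1)
    (hπk0 : ∀ s a, 0 ≤ πk s a) (hπk1 : ∀ s, ∑ a, πk s a = 1)
    (hπβ0 : ∀ s a, 0 ≤ πβ s a) (hπβ1 : ∀ s, ∑ a, πβ s a = 1)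
    -- value functions of π_k and π_β (Bellman equations, state-only reward)
    (Vk Vβ : S → ℝ)
    (hVk : ∀ s, Vk s = r s + γ * ∑ s', (∑ a, πk s a * p s a s') * Vk s')
    (hVβ : ∀ s, Vβ s = r s + γ * ∑ s', (∑ a, πβ s a * p s a s') * Vβ s')
    -- discounted visitation frequency of π_β started from each state
    (ρβ : S → S → ℝ)
    (hρβ : ∀ s u, ρβ s u = (if u = s then (1 : ℝ) else 0)
            + γ * ∑ s'', ρβ s s'' * (∑ a, πβ s'' a * p s'' a u))
    -- an arbitrary probability mass function on states
    (ρ : S → ℝ) (hρ0 : ∀ s, 0 ≤ ρ s) (hρ1 : ∑ s, ρ s = 1) :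
    |∑ s, ρ s * ∑ a, π s a *
        (((r s + γ * ∑ s', p s a s' * Vk s') - Vk s)
          - ((r s + γ * ∑ s', p s a s' * Vβ s') - Vβ s))|
      ≤ (2 * γ * (γ + 1) / (1 - γ)) * Rmax
          * (univ.sup' univ_nonempty fun s =>
              ∑ s', ρβ s s' * ((1 / 2) * ∑ a, |πk s' a - πβ s' a|)) := by
  have hγ' : 0 < 1 - γ := by linarith
  have hRmax : 0 ≤ Rmax := le_trans (abs_nonneg _) (hr (Classical.arbitrary S))
  -- transition matrices
  set Pk : S → S → ℝ := fun s u => ∑ a, πk s a * p s a u with hPkdef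
  set Pβ : S → S → ℝ := fun s u => ∑ a, πβ s a * p s a u with hPβdef
  have hPβ0 : ∀ s u, 0 ≤ Pβ s u :=
    fun s u => Finset.sum_nonneg fun a _ => mul_nonneg (hπβ0 s a) (hp0 s a u)
  have hPk0 : ∀ s u, 0 ≤ Pk s u :=
    fun s u => Finset.sum_nonneg fun a _ => mul_nonneg (hπk0 s a) (hp0 s a u)
  have hsum1 : ∀ (q : S → A → ℝ), (∀ s, ∑ a, q s a = 1) → ∀ s, ∑ u, ∑ a, q s a * p s a u = 1 := by
    intro q hq s
    rw [Finset.sum_comm]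
    calc ∑ a, ∑ u, q s a * p s a u = ∑ a, q s a * ∑ u, p s a u := by
          apply Finset.sum_congr rfl; intro a _; rw [Finset.mul_sum]
    _ = 1 := by simp [hp1, hq]
  have hPβ1 : ∀ s, ∑ u, Pβ s u = 1 := hsum1 πβ hπβ1
  have hPk1 : ∀ s, ∑ u, Pk s u = 1 := hsum1 πk hπk1
  -- value bounds
  have hVkb : ∀ s, |Vk s| ≤ Rmax / (1 - γ) :=
    aux_value_bound Pk hPk0 hPk1 γ hγ0 hγ1 r Rmax hr Vk hVk
  -- nonnegativity of ρβ
  have hρβ0 : ∀ s u, 0 ≤ ρβ s u := by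
    intro s
    exact aux_rho_nonneg Pβ hPβ0 hPβ1 γ hγ0 hγ1 s (ρβ s) (fun u => hρβ s u)
  -- definitions
  set D : S → ℝ := fun s => Vk s - Vβ s with hDdef
  set e : S → ℝ := fun s => D s - γ * ∑ u, Pβ s u * D u with hedef
  set DTV : S → ℝ := fun s => (1 / 2) * ∑ a, |πk s a - πβ s a| with hDTVdef
  have hDTV0 : ∀ s, 0 ≤ DTV s := by
    intro s
    exact mul_nonneg (by norm_num) (Finset.sum_nonneg fun a _ => abs_nonneg _)
  set Δ : ℝ := univ.sup' univ_nonempty fun s => ∑ s', ρβ s s' * DTV s' with hΔdef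
  -- e in terms of (Pk - Pβ) Vk
  have he_eq : ∀ s, e s = γ * ∑ u, (Pk s u - Pβ s u) * Vk u := by
    intro s
    have h1 : D s = γ * ∑ u, Pk s u * Vk u - γ * ∑ u, Pβ s u * Vβ u := by
      rw [hDdef]; simp only [hVk s, hVβ s]; ring
    rw [hedef]
    simp only [h1]
    rw [Finset.mul_sum, Finset.mul_sum, Finset.mul_sum, Finset.mul_sum,
      ← Finset.sum_sub_distrib, ← Finset.sum_sub_distrib]
    apply Finset.sum_congr rfl; intro u _
    simp only [hDdef]; ring
  -- bound on e
  have he_bound : ∀ s, |e s| ≤ (2 * γ * Rmax / (1 - γ)) * DTV s := by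
    intro s
    rw [he_eq s, abs_mul, abs_of_nonneg hγ0]
    have h1 : |∑ u, (Pk s u - Pβ s u) * Vk u| ≤ (Rmax / (1 - γ)) * ∑ u, |Pk s u - Pβ s u| := by
      calc |∑ u, (Pk s u - Pβ s u) * Vk u| ≤ ∑ u, |(Pk s u - Pβ s u) * Vk u| :=
            Finset.abs_sum_le_sum_abs _ _
      _ ≤ ∑ u, |Pk s u - Pβ s u| * (Rmax / (1 - γ)) := by
          apply Finset.sum_le_sum; intro u _
          rw [abs_mul]
          exact mul_le_mul_of_nonneg_left (hVkb u) (abs_nonneg _)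
      _ = (Rmax / (1 - γ)) * ∑ u, |Pk s u - Pβ s u| := by rw [← Finset.sum_mul]; ring
    have h2 : ∑ u, |Pk s u - Pβ s u| ≤ ∑ a, |πk s a - πβ s a| := by
      calc ∑ u, |Pk s u - Pβ s u| = ∑ u, |∑ a, (πk s a - πβ s a) * p s a u| := by
            apply Finset.sum_congr rfl; intro u _
            congr 1
            rw [← Finset.sum_sub_distrib]
            apply Finset.sum_congr rfl; intro a _; ring
      _ ≤ ∑ u, ∑ a, |(πk s a - πβ s a) * p s a u| :=
            Finset.sum_le_sum fun u _ => Finset.abs_sum_le_sum_abs _ _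
      _ = ∑ a, ∑ u, |πk s a - πβ s a| * p s a u := by
            rw [Finset.sum_comm]
            apply Finset.sum_congr rfl; intro a _
            apply Finset.sum_congr rfl; intro u _
            rw [abs_mul, abs_of_nonneg (hp0 s a u)]
      _ = ∑ a, |πk s a - πβ s a| := by
            apply Finset.sum_congr rfl; intro a _
            rw [← Finset.mul_sum, hp1, mul_one]
    calc γ * |∑ u, (Pk s u - Pβ s u) * Vk u|
        ≤ γ * ((Rmax / (1 - γ)) * ∑ a, |πk s a - πβ s a|) := by
          apply mul_le_mul_of_nonneg_left _ hγ0
          exact le_trans h1 (mul_le_mul_of_nonneg_left h2 (by positivity))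
    _ = (2 * γ * Rmax / (1 - γ)) * DTV s := by
          simp only [hDTVdef]; field_simp
  -- D s = ∑ u, ρβ s u * e u
  have hD_rep : ∀ s, D s = ∑ u, ρβ s u * e u := by
    intro s
    have h1 : ∀ u', γ * ∑ u, ρβ s u * Pβ u u' = ρβ s u' - (if u' = s then (1:ℝ) else 0) := by
      intro u'
      simp only [hPβdef]
      rw [hρβ s u']; ring
    calc D s = ∑ u', (if u' = s then (1:ℝ) else 0) * D u' := by
          simp [ite_mul]
    _ = ∑ u', (ρβ s u' - γ * ∑ u, ρβ s u * Pβ u u') * D u' := by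
          apply Finset.sum_congr rfl; intro u' _
          rw [h1 u']; ring
    _ = ∑ u', ρβ s u' * D u' - γ * ∑ u', (∑ u, ρβ s u * Pβ u u') * D u' := by
          rw [Finset.mul_sum, ← Finset.sum_sub_distrib]
          apply Finset.sum_congr rfl; intro u' _; ring
    _ = ∑ u', ρβ s u' * D u' - γ * ∑ u, ρβ s u * ∑ u', Pβ u u' * D u' := by
          congr 1
          congr 1
          calc ∑ u', (∑ u, ρβ s u * Pβ u u') * D u'
              = ∑ u', ∑ u, ρβ s u * Pβ u u' * D u' := by
                apply Finset.sum_congr rfl; intro u' _; rw [Finset.sum_mul]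
          _ = ∑ u, ∑ u', ρβ s u * Pβ u u' * D u' := Finset.sum_comm
          _ = ∑ u, ρβ s u * ∑ u', Pβ u u' * D u' := by
                apply Finset.sum_congr rfl; intro u _
                rw [Finset.mul_sum]
                apply Finset.sum_congr rfl; intro u' _; ring
    _ = ∑ u, ρβ s u * e u := by
          rw [Finset.mul_sum, ← Finset.sum_sub_distrib]
          apply Finset.sum_congr rfl; intro u _
          simp only [hedef]; ring
  -- bound on D
  have hΔ_ge : ∀ s, ∑ u, ρβ s u * DTV u ≤ Δ := by
    intro s
    exact Finset.le_sup' (fun s => ∑ s', ρβ s s' * DTV s') (Finset.mem_univ s)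
  have hC0 : 0 ≤ 2 * γ * Rmax / (1 - γ) := by positivity
  have hDb : ∀ s, |D s| ≤ (2 * γ * Rmax / (1 - γ)) * Δ := by
    intro s
    rw [hD_rep s]
    calc |∑ u, ρβ s u * e u| ≤ ∑ u, |ρβ s u * e u| := Finset.abs_sum_le_sum_abs _ _
    _ ≤ ∑ u, ρβ s u * ((2 * γ * Rmax / (1 - γ)) * DTV u) := by
        apply Finset.sum_le_sum; intro u _
        rw [abs_mul, abs_of_nonneg (hρβ0 s u)]
        exact mul_le_mul_of_nonneg_left (he_bound u) (hρβ0 s u)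
    _ = (2 * γ * Rmax / (1 - γ)) * ∑ u, ρβ s u * DTV u := by
        rw [Finset.mul_sum]
        apply Finset.sum_congr rfl; intro u _; ring
    _ ≤ (2 * γ * Rmax / (1 - γ)) * Δ := mul_le_mul_of_nonneg_left (hΔ_ge s) hC0
  set B : ℝ := (2 * γ * Rmax / (1 - γ)) * Δ with hBdef
  have hB0 : 0 ≤ B := le_trans (abs_nonneg _) (hDb (Classical.arbitrary S))
  -- rewrite the inner sum
  have hinner : ∀ s, (∑ a, π s a *
        (((r s + γ * ∑ s', p s a s' * Vk s') - Vk s)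
          - ((r s + γ * ∑ s', p s a s' * Vβ s') - Vβ s)))
      = (γ * ∑ a, π s a * ∑ s', p s a s' * D s') - D s := by
    intro s
    have h1 : ∀ a, π s a *
        (((r s + γ * ∑ s', p s a s' * Vk s') - Vk s)
          - ((r s + γ * ∑ s', p s a s' * Vβ s') - Vβ s))
        = γ * (π s a * ∑ s', p s a s' * D s') - π s a * D s := by
      intro a
      have h2 : (∑ s', p s a s' * Vk s') - (∑ s', p s a s' * Vβ s') = ∑ s', p s a s' * D s' := by
        rw [← Finset.sum_sub_distrib]
        apply Finset.sum_congr rfl; intro s' _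
        simp only [hDdef]; ring
      simp only [hDdef] at h2 ⊢
      linear_combination (γ * π s a) * h2
    rw [Finset.sum_congr rfl (fun a _ => h1 a), Finset.sum_sub_distrib, ← Finset.mul_sum,
      ← Finset.sum_mul, hπ1 s, one_mul]
  have hinner_bound : ∀ s, |(γ * ∑ a, π s a * ∑ s', p s a s' * D s') - D s| ≤ (γ + 1) * B := by
    intro s
    have h1 : |∑ a, π s a * ∑ s', p s a s' * D s'| ≤ B := by
      calc |∑ a, π s a * ∑ s', p s a s' * D s'| ≤ ∑ a, |π s a * ∑ s', p s a s' * D s'| :=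
            Finset.abs_sum_le_sum_abs _ _
      _ ≤ ∑ a, π s a * B := by
          apply Finset.sum_le_sum; intro a _
          rw [abs_mul, abs_of_nonneg (hπ0 s a)]
          apply mul_le_mul_of_nonneg_left _ (hπ0 s a)
          calc |∑ s', p s a s' * D s'| ≤ ∑ s', |p s a s' * D s'| := Finset.abs_sum_le_sum_abs _ _
          _ ≤ ∑ s', p s a s' * B := by
              apply Finset.sum_le_sum; intro s' _
              rw [abs_mul, abs_of_nonneg (hp0 s a s')]
              exact mul_le_mul_of_nonneg_left (hDb s') (hp0 s a s')
          _ = B := by rw [← Finset.sum_mul, hp1, one_mul]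
      _ = B := by rw [← Finset.sum_mul, hπ1, one_mul]
    calc |(γ * ∑ a, π s a * ∑ s', p s a s' * D s') - D s|
        ≤ |γ * ∑ a, π s a * ∑ s', p s a s' * D s'| + |D s| := abs_sub _ _
    _ ≤ γ * B + B := by
        apply add_le_add _ (hDb s)
        rw [abs_mul, abs_of_nonneg hγ0]
        exact mul_le_mul_of_nonneg_left h1 hγ0
    _ = (γ + 1) * B := by ring
  calc |∑ s, ρ s * ∑ a, π s a *
        (((r s + γ * ∑ s', p s a s' * Vk s') - Vk s)
          - ((r s + γ * ∑ s', p s a s' * Vβ s') - Vβ s))|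
      ≤ ∑ s, |ρ s * ∑ a, π s a *
        (((r s + γ * ∑ s', p s a s' * Vk s') - Vk s)
          - ((r s + γ * ∑ s', p s a s' * Vβ s') - Vβ s))| := Finset.abs_sum_le_sum_abs _ _
    _ ≤ ∑ s, ρ s * ((γ + 1) * B) := by
        apply Finset.sum_le_sum; intro s _
        rw [abs_mul, abs_of_nonneg (hρ0 s), hinner s]
        exact mul_le_mul_of_nonneg_left (hinner_bound s) (hρ0 s)
    _ = (γ + 1) * B := by rw [← Finset.sum_mul, hρ1, one_mul]
    _ = (2 * γ * (γ + 1) / (1 - γ)) * Rmax * Δ := by rw [hBdef]; field_simp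
end

section
/- (Corollary, monotonic improvement bound with advantage replacement.) Suppose the reward depends only on the state and |r(s)| ≤ R_max for all s. Let π, π_k, π̂_β and π_D be policies and write ρ_D = ρ_{π_D}. Let 𝔸_k = max_{s,a} |A_{π_k}(s,a)|, and let Δ = max_s Σ_{s'} ρ_{π̂_β}^{(s)}(s') D_TV(π_k‖π̂_β)[s'], where ρ_{π̂_β}^{(s)} is the discounted visitation frequency of π̂_β started from s. Then J(π) − J(π_k) ≥ Σ_s ρ_D(s) Σ_a π(a|s) A_{π̂_β}(s,a) − (4γ/(1−γ)) · 𝔸_k · (max_s D_TV(π‖π_k)[s]) · [ Σ_s ρ_{π_k}(s) D_TV(π‖π_k)[s] + Σ_s ρ_{π̂_β}(s) D_TV(π_k‖π̂_β)[s] + Σ_s ρ_D(s) D_TV(π̂_β‖π_D)[s] ] − (2γ(γ+1)/(1−γ)²) · R_max · Δ. -/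
open Finset
set_option linter.unusedSectionVars false

section Helpers
variable {S : Type*} [Fintype S] [DecidableEq S]

lemma swapl {ι κ : Type*} [Fintype ι] [Fintype κ] (ρ : ι → ℝ) (P : ι → κ → ℝ) (X : κ → ℝ) :
    ∑ s, ρ s * ∑ s', P s s' * X s' = ∑ s', (∑ s, ρ s * P s s') * X s' := by
  simp_rw [Finset.mul_sum, Finset.sum_mul, mul_assoc]
  exact Finset.sum_comm

lemma kernel_rowsum {A : Type*} [Fintype A] (p : S → A → S → ℝ)
    (hp1 : ∀ s a, ∑ s', p s a s' = 1)
    (μ : S → A → ℝ) (hμ1 : ∀ s, ∑ a, μ s a = 1) (s : S) :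
    ∑ s', ∑ a, μ s a * p s a s' = 1 := by
  rw [Finset.sum_comm]
  calc ∑ a, ∑ s', μ s a * p s a s' = ∑ a, μ s a := by
        apply Finset.sum_congr rfl; intro a _
        rw [← Finset.mul_sum, hp1 s a, mul_one]
    _ = 1 := hμ1 s

lemma kernel_l1 {A : Type*} [Fintype A] (p : S → A → S → ℝ)
    (hp0 : ∀ s a s', 0 ≤ p s a s') (hp1 : ∀ s a, ∑ s', p s a s' = 1)
    (μ ν : S → A → ℝ) (s : S) :
    ∑ s', |(∑ a, μ s a * p s a s') - (∑ a, ν s a * p s a s')| ≤ ∑ a, |μ s a - ν s a| := by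
  calc ∑ s', |(∑ a, μ s a * p s a s') - (∑ a, ν s a * p s a s')|
      = ∑ s', |∑ a, (μ s a - ν s a) * p s a s'| := by
        apply Finset.sum_congr rfl; intro s' _
        congr 1
        rw [← Finset.sum_sub_distrib]
        apply Finset.sum_congr rfl; intros; ring
    _ ≤ ∑ s', ∑ a, |μ s a - ν s a| * p s a s' := by
        apply Finset.sum_le_sum; intro s' _
        refine (Finset.abs_sum_le_sum_abs _ _).trans (le_of_eq ?_)
        apply Finset.sum_congr rfl; intro a _
        rw [abs_mul, abs_of_nonneg (hp0 s a s')]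
    _ = ∑ a, |μ s a - ν s a| := by
        rw [Finset.sum_comm]
        apply Finset.sum_congr rfl; intro a _
        rw [← Finset.mul_sum, hp1 s a, mul_one]

lemma policy_avg {A : Type*} [Fintype A] (p : S → A → S → ℝ)
    (μ : S → A → ℝ) (hμ1 : ∀ s, ∑ a, μ s a = 1) (γ : ℝ) (r W : S → ℝ) (s : S) :
    ∑ a, μ s a * ((r s + γ * ∑ s', p s a s' * W s') - W s)
      = r s + γ * ∑ s', (∑ a, μ s a * p s a s') * W s' - W s := by
  have h : ∑ a, μ s a * ∑ s', p s a s' * W s' = ∑ s', (∑ a, μ s a * p s a s') * W s' :=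
    swapl (fun a => μ s a) (fun a s' => p s a s') W
  calc ∑ a, μ s a * ((r s + γ * ∑ s', p s a s' * W s') - W s)
      = (∑ a, μ s a) * (r s - W s) + γ * ∑ a, μ s a * ∑ s', p s a s' * W s' := by
        rw [Finset.sum_mul, Finset.mul_sum, ← Finset.sum_add_distrib]
        apply Finset.sum_congr rfl; intros; ring
    _ = r s + γ * ∑ s', (∑ a, μ s a * p s a s') * W s' - W s := by
        rw [hμ1 s, h]; ring

lemma rowsum_one (ρ : S → ℝ) (P : S → S → ℝ) (hP1 : ∀ s, ∑ s', P s s' = 1) :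
    ∑ s', ∑ s, ρ s * P s s' = ∑ s, ρ s := by
  rw [Finset.sum_comm]
  apply Finset.sum_congr rfl
  intro s _
  rw [← Finset.mul_sum, hP1 s, mul_one]

/-- Nonnegativity of a discounted visitation fixed point. -/
lemma rho_nonneg (γ : ℝ) (hγ0 : 0 ≤ γ) (hγ1 : γ < 1)
    (P : S → S → ℝ) (hP0 : ∀ s s', 0 ≤ P s s') (hP1 : ∀ s, ∑ s', P s s' = 1)
    (d : S → ℝ) (hd : ∀ s, 0 ≤ d s)
    (ρ : S → ℝ) (hρ : ∀ s', ρ s' = d s' + γ * ∑ s, ρ s * P s s') :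
    ∀ s, 0 ≤ ρ s := by
  have key : ∀ s', γ * ∑ s, min (ρ s) 0 * P s s' ≤ min (ρ s') 0 := by
    intro s'
    have h1 : γ * ∑ s, min (ρ s) 0 * P s s' ≤ 0 := by
      apply mul_nonpos_of_nonneg_of_nonpos hγ0
      apply Finset.sum_nonpos
      intro s _
      exact mul_nonpos_of_nonpos_of_nonneg (min_le_right _ _) (hP0 s s')
    have h2 : γ * ∑ s, min (ρ s) 0 * P s s' ≤ ρ s' := by
      have : γ * ∑ s, min (ρ s) 0 * P s s' ≤ γ * ∑ s, ρ s * P s s' := by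
        apply mul_le_mul_of_nonneg_left _ hγ0
        apply Finset.sum_le_sum
        intro s _
        exact mul_le_mul_of_nonneg_right (min_le_left _ _) (hP0 s s')
      have hd' := hd s'
      rw [hρ s']
      linarith
    exact le_min h2 h1
  have hsum : γ * ∑ s, min (ρ s) 0 ≤ ∑ s', min (ρ s') 0 := by
    calc γ * ∑ s, min (ρ s) 0 = ∑ s', γ * ∑ s, min (ρ s) 0 * P s s' := by
          rw [← Finset.mul_sum]
          congr 1
          rw [Finset.sum_comm]
          apply Finset.sum_congr rfl
          intro s _
          rw [← Finset.mul_sum, hP1 s, mul_one]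
      _ ≤ ∑ s', min (ρ s') 0 := Finset.sum_le_sum fun s' _ => key s'
  have hm0 : (0:ℝ) ≤ ∑ s, min (ρ s) 0 := by nlinarith [hsum]
  have hall : ∀ s ∈ (univ : Finset S), min (ρ s) 0 = 0 := by
    have hle : ∀ s ∈ (univ : Finset S), min (ρ s) 0 ≤ 0 := fun s _ => min_le_right _ _
    have hz : ∑ s, min (ρ s) 0 = 0 :=
      le_antisymm (Finset.sum_nonpos hle) hm0
    exact (Finset.sum_eq_zero_iff_of_nonpos hle).mp hz
  intro s
  have := hall s (mem_univ s)
  have := min_le_left (ρ s) 0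
  rcases le_or_gt 0 (ρ s) with h | h
  · exact h
  · exfalso; have : min (ρ s) 0 = ρ s := min_eq_left h.le; linarith [hall s (mem_univ s)]


/-- Total mass of a visitation fixed point. -/
lemma rho_mass (γ : ℝ)
    (P : S → S → ℝ) (hP1 : ∀ s, ∑ s', P s s' = 1)
    (d : S → ℝ) (ρ : S → ℝ)
    (hρ : ∀ s', ρ s' = d s' + γ * ∑ s, ρ s * P s s') :
    (1 - γ) * ∑ s, ρ s = ∑ s, d s := by
  have h : ∑ s', ρ s' = ∑ s', d s' + γ * ∑ s, ρ s := by
    calc ∑ s', ρ s' = ∑ s', (d s' + γ * ∑ s, ρ s * P s s') :=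
          Finset.sum_congr rfl fun s' _ => hρ s'
      _ = ∑ s', d s' + γ * ∑ s', ∑ s, ρ s * P s s' := by
          rw [Finset.sum_add_distrib, ← Finset.mul_sum]
      _ = ∑ s', d s' + γ * ∑ s, ρ s := by rw [rowsum_one ρ P hP1]
  linarith

lemma rho_shift (γ : ℝ) (hγ0 : 0 ≤ γ) (hγ1 : γ < 1)
    (P1 P2 : S → S → ℝ) (hP10 : ∀ s s', 0 ≤ P1 s s') (hP11 : ∀ s, ∑ s', P1 s s' = 1)
    (d : S → ℝ) (ρ1 ρ2 : S → ℝ)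
    (hρ1 : ∀ s', ρ1 s' = d s' + γ * ∑ s, ρ1 s * P1 s s')
    (hρ2 : ∀ s', ρ2 s' = d s' + γ * ∑ s, ρ2 s * P2 s s')
    (hρ2p : ∀ s, 0 ≤ ρ2 s)
    (c : S → ℝ) (hc : ∀ s, ∑ s', |P1 s s' - P2 s s'| ≤ c s) :
    ∑ s, |ρ1 s - ρ2 s| ≤ γ / (1 - γ) * ∑ s, ρ2 s * c s := by
  have key : ∀ s', |ρ1 s' - ρ2 s'| ≤
      γ * (∑ s, |ρ1 s - ρ2 s| * P1 s s' + ∑ s, ρ2 s * |P1 s s' - P2 s s'|) := by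
    intro s'
    have hdiff : ρ1 s' - ρ2 s' =
        γ * (∑ s, (ρ1 s - ρ2 s) * P1 s s' + ∑ s, ρ2 s * (P1 s s' - P2 s s')) := by
      rw [hρ1 s', hρ2 s', ← Finset.sum_add_distrib]
      have hterm : ∀ x : S, (ρ1 x - ρ2 x) * P1 x s' + ρ2 x * (P1 x s' - P2 x s')
          = ρ1 x * P1 x s' - ρ2 x * P2 x s' := fun x => by ring
      simp only [hterm]
      rw [Finset.sum_sub_distrib]
      ring
    rw [hdiff, abs_mul, abs_of_nonneg hγ0]
    apply mul_le_mul_of_nonneg_left _ hγ0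
    calc |∑ s, (ρ1 s - ρ2 s) * P1 s s' + ∑ s, ρ2 s * (P1 s s' - P2 s s')|
        ≤ |∑ s, (ρ1 s - ρ2 s) * P1 s s'| + |∑ s, ρ2 s * (P1 s s' - P2 s s')| := abs_add_le _ _
      _ ≤ ∑ s, |ρ1 s - ρ2 s| * P1 s s' + ∑ s, ρ2 s * |P1 s s' - P2 s s'| := by
          gcongr
          · calc |∑ s, (ρ1 s - ρ2 s) * P1 s s'| ≤ ∑ s, |(ρ1 s - ρ2 s) * P1 s s'| :=
                Finset.abs_sum_le_sum_abs _ _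
              _ = ∑ s, |ρ1 s - ρ2 s| * P1 s s' := by
                  apply Finset.sum_congr rfl; intro s _
                  rw [abs_mul, abs_of_nonneg (hP10 s s')]
          · calc |∑ s, ρ2 s * (P1 s s' - P2 s s')| ≤ ∑ s, |ρ2 s * (P1 s s' - P2 s s')| :=
                Finset.abs_sum_le_sum_abs _ _
              _ = ∑ s, ρ2 s * |P1 s s' - P2 s s'| := by
                  apply Finset.sum_congr rfl; intro s _
                  rw [abs_mul, abs_of_nonneg (hρ2p s)]
  have hsum : ∑ s', |ρ1 s' - ρ2 s'| ≤
      γ * (∑ s', |ρ1 s' - ρ2 s'| + ∑ s, ρ2 s * c s) := by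
    calc ∑ s', |ρ1 s' - ρ2 s'|
        ≤ ∑ s', γ * (∑ s, |ρ1 s - ρ2 s| * P1 s s' + ∑ s, ρ2 s * |P1 s s' - P2 s s'|) :=
          Finset.sum_le_sum fun s' _ => key s'
      _ = γ * (∑ s', ∑ s, |ρ1 s - ρ2 s| * P1 s s' + ∑ s', ∑ s, ρ2 s * |P1 s s' - P2 s s'|) := by
          rw [← Finset.mul_sum, Finset.sum_add_distrib]
      _ = γ * (∑ s, |ρ1 s - ρ2 s| + ∑ s, ρ2 s * ∑ s', |P1 s s' - P2 s s'|) := by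
          congr 1
          congr 1
          · exact rowsum_one _ P1 hP11
          · rw [Finset.sum_comm]
            apply Finset.sum_congr rfl
            intro s _
            rw [← Finset.mul_sum]
      _ ≤ γ * (∑ s, |ρ1 s - ρ2 s| + ∑ s, ρ2 s * c s) := by
          apply mul_le_mul_of_nonneg_left _ hγ0
          gcongr with s hs
          · exact hρ2p s
          · exact hc s
  have h1γ : 0 < 1 - γ := by linarith
  rw [div_mul_eq_mul_div, le_div_iff₀ h1γ]
  nlinarith [hsum]

/-- Performance difference lemma, general weighting. -/
lemma pdl (γ : ℝ)
    (P1 P2 : S → S → ℝ) (r V1 V2 d ρ1 : S → ℝ)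
    (hV1 : ∀ s, V1 s = r s + γ * ∑ s', P1 s s' * V1 s')
    (hV2 : ∀ s, V2 s = r s + γ * ∑ s', P2 s s' * V2 s')
    (hρ1 : ∀ s', ρ1 s' = d s' + γ * ∑ s, ρ1 s * P1 s s') :
    ∑ s, d s * V1 s - ∑ s, d s * V2 s
      = ∑ s, ρ1 s * (r s + γ * ∑ s', P1 s s' * V2 s' - V2 s) := by
  have key : ∀ X : S → ℝ, γ * ∑ s, ρ1 s * ∑ s', P1 s s' * X s'
      = ∑ s', ρ1 s' * X s' - ∑ s', d s' * X s' := by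
    intro X
    rw [swapl, Finset.mul_sum, ← Finset.sum_sub_distrib]
    apply Finset.sum_congr rfl
    intro s' _
    have h : γ * ∑ s, ρ1 s * P1 s s' = ρ1 s' - d s' := by linarith [hρ1 s']
    rw [← mul_assoc, h, sub_mul]
  have e1 : ∑ s, ρ1 s * (r s + γ * ∑ s', P1 s s' * V2 s' - V2 s)
      = ∑ s, ρ1 s * r s + γ * ∑ s, ρ1 s * ∑ s', P1 s s' * V2 s' - ∑ s, ρ1 s * V2 s := by
    rw [Finset.mul_sum, ← Finset.sum_add_distrib, ← Finset.sum_sub_distrib]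
    apply Finset.sum_congr rfl; intro s _; ring
  have e2 : ∑ s, ρ1 s * r s = ∑ s, ρ1 s * V1 s - γ * ∑ s, ρ1 s * ∑ s', P1 s s' * V1 s' := by
    rw [Finset.mul_sum, ← Finset.sum_sub_distrib]
    apply Finset.sum_congr rfl; intro s _
    have h : r s = V1 s - γ * ∑ s', P1 s s' * V1 s' := by linarith [hV1 s]
    rw [h]; ring
  rw [e1, e2, key V1, key V2]; ring

/-- Sup-norm bound on the value function. -/
lemma value_bound [Nonempty S] (γ : ℝ) (hγ0 : 0 ≤ γ) (hγ1 : γ < 1)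
    (P : S → S → ℝ) (hP0 : ∀ s s', 0 ≤ P s s') (hP1 : ∀ s, ∑ s', P s s' = 1)
    (r : S → ℝ) (Rmax : ℝ) (hr : ∀ s, |r s| ≤ Rmax)
    (V : S → ℝ) (hV : ∀ s, V s = r s + γ * ∑ s', P s s' * V s') :
    ∀ s, |V s| ≤ Rmax / (1 - γ) := by
  obtain ⟨s0, -, hs0⟩ := Finset.exists_max_image (univ : Finset S) (fun s => |V s|)
    ⟨Classical.arbitrary S, mem_univ _⟩
  have hb : |V s0| ≤ Rmax + γ * |V s0| := by
    calc |V s0| = |r s0 + γ * ∑ s', P s0 s' * V s'| := by rw [← hV s0]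
      _ ≤ |r s0| + γ * |∑ s', P s0 s' * V s'| := by
          have h := abs_add_le (r s0) (γ * ∑ s', P s0 s' * V s')
          rw [abs_mul, abs_of_nonneg hγ0] at h
          exact h
      _ ≤ Rmax + γ * |V s0| := by
          have hVs : |∑ s', P s0 s' * V s'| ≤ |V s0| := by
            calc |∑ s', P s0 s' * V s'| ≤ ∑ s', |P s0 s' * V s'| := Finset.abs_sum_le_sum_abs _ _
            _ = ∑ s', P s0 s' * |V s'| := by
                apply Finset.sum_congr rfl; intro s' _
                rw [abs_mul, abs_of_nonneg (hP0 s0 s')]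
            _ ≤ ∑ s', P s0 s' * |V s0| :=
                Finset.sum_le_sum fun s' _ =>
                  mul_le_mul_of_nonneg_left (hs0 s' (mem_univ s')) (hP0 s0 s')
            _ = |V s0| := by rw [← Finset.sum_mul, hP1 s0, one_mul]
          exact add_le_add (hr s0) (mul_le_mul_of_nonneg_left hVs hγ0)
  have h1γ : 0 < 1 - γ := by linarith
  intro s
  have : |V s0| ≤ Rmax / (1 - γ) := by rw [le_div_iff₀ h1γ]; nlinarith
  exact (hs0 s (mem_univ s)).trans this

end Helpers


/-- Corollary: monotonic improvement bound with advantage replacement. -/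
theorem offline_improvement_bound_with_replacement
    {S A : Type*} [Fintype S] [DecidableEq S] [Fintype A] [Nonempty S] [Nonempty A]
    -- transition kernel
    (p : S → A → S → ℝ)
    (hp0 : ∀ s a s', 0 ≤ p s a s') (hp1 : ∀ s a, ∑ s', p s a s' = 1)
    -- discount factor
    (γ : ℝ) (hγ0 : 0 ≤ γ) (hγ1 : γ < 1)
    -- initial state distribution
    (d0 : S → ℝ) (hd00 : ∀ s, 0 ≤ d0 s) (hd01 : ∑ s, d0 s = 1)
    -- state-only bounded reward
    (r : S → ℝ) (Rmax : ℝ) (hr : ∀ s, |r s| ≤ Rmax)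
    -- policies: target π, updated π_k, estimated behavior π̂β, dataset policy π_D
    (π πk πβ πD : S → A → ℝ)
    (hπ0 : ∀ s a, 0 ≤ π s a) (hπ1 : ∀ s, ∑ a, π s a = 1)
    (hπk0 : ∀ s a, 0 ≤ πk s a) (hπk1 : ∀ s, ∑ a, πk s a = 1)
    (hπβ0 : ∀ s a, 0 ≤ πβ s a) (hπβ1 : ∀ s, ∑ a, πβ s a = 1)
    (hπD0 : ∀ s a, 0 ≤ πD s a) (hπD1 : ∀ s, ∑ a, πD s a = 1)
    -- value functions of π, π_k and π̂β (Bellman equations, state-only reward)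
    (V Vk Vβ : S → ℝ)
    (hV : ∀ s, V s = r s + γ * ∑ s', (∑ a, π s a * p s a s') * V s')
    (hVk : ∀ s, Vk s = r s + γ * ∑ s', (∑ a, πk s a * p s a s') * Vk s')
    (hVβ : ∀ s, Vβ s = r s + γ * ∑ s', (∑ a, πβ s a * p s a s') * Vβ s')
    -- discounted visitation frequencies (from d₀) of π_k, π̂β and π_D
    (ρk ρβ ρD : S → ℝ)
    (hρk : ∀ s', ρk s' = d0 s' + γ * ∑ s, ρk s * (∑ a, πk s a * p s a s'))
    (hρβ : ∀ s', ρβ s' = d0 s' + γ * ∑ s, ρβ s * (∑ a, πβ s a * p s a s'))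
    (hρD : ∀ s', ρD s' = d0 s' + γ * ∑ s, ρD s * (∑ a, πD s a * p s a s'))
    -- discounted visitation frequency of π̂β started from each state
    (ρβs : S → S → ℝ)
    (hρβs : ∀ s u, ρβs s u = (if u = s then (1 : ℝ) else 0)
            + γ * ∑ s'', ρβs s s'' * (∑ a, πβ s'' a * p s'' a u)) :
    (∑ s, d0 s * V s) - (∑ s, d0 s * Vk s)
      ≥ (∑ s, ρD s * ∑ a, π s a * ((r s + γ * ∑ s', p s a s' * Vβ s') - Vβ s))
        - (4 * γ / (1 - γ))
            * (univ.sup' univ_nonempty fun sa : S × A =>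
                |(r sa.1 + γ * ∑ s', p sa.1 sa.2 s' * Vk s') - Vk sa.1|)
            * (univ.sup' univ_nonempty fun s =>
                (1 / 2) * ∑ a, |π s a - πk s a|)
            * ((∑ s, ρk s * ((1 / 2) * ∑ a, |π s a - πk s a|))
                + (∑ s, ρβ s * ((1 / 2) * ∑ a, |πk s a - πβ s a|))
                + (∑ s, ρD s * ((1 / 2) * ∑ a, |πβ s a - πD s a|)))
        - (2 * γ * (γ + 1) / (1 - γ) ^ 2) * Rmax
            * (univ.sup' univ_nonempty fun s =>
                ∑ s', ρβs s s' * ((1 / 2) * ∑ a, |πk s' a - πβ s' a|)) := by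

  have h1γ : 0 < 1 - γ := by linarith
  have hR0 : 0 ≤ Rmax := (abs_nonneg _).trans (hr (Classical.arbitrary S))
  -- state-transition matrices
  let Pπ : S → S → ℝ := fun s s' => ∑ a, π s a * p s a s'
  let Pk : S → S → ℝ := fun s s' => ∑ a, πk s a * p s a s'
  let Pβ : S → S → ℝ := fun s s' => ∑ a, πβ s a * p s a s'
  let PD : S → S → ℝ := fun s s' => ∑ a, πD s a * p s a s'
  have hPπ0 : ∀ s s', 0 ≤ Pπ s s' := fun s s' =>
    Finset.sum_nonneg fun a _ => mul_nonneg (hπ0 s a) (hp0 s a s')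
  have hPk0 : ∀ s s', 0 ≤ Pk s s' := fun s s' =>
    Finset.sum_nonneg fun a _ => mul_nonneg (hπk0 s a) (hp0 s a s')
  have hPβ0 : ∀ s s', 0 ≤ Pβ s s' := fun s s' =>
    Finset.sum_nonneg fun a _ => mul_nonneg (hπβ0 s a) (hp0 s a s')
  have hPD0 : ∀ s s', 0 ≤ PD s s' := fun s s' =>
    Finset.sum_nonneg fun a _ => mul_nonneg (hπD0 s a) (hp0 s a s')
  have hPπ1 : ∀ s, ∑ s', Pπ s s' = 1 := fun s => kernel_rowsum p hp1 π hπ1 s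
  have hPk1 : ∀ s, ∑ s', Pk s s' = 1 := fun s => kernel_rowsum p hp1 πk hπk1 s
  have hPβ1 : ∀ s, ∑ s', Pβ s s' = 1 := fun s => kernel_rowsum p hp1 πβ hπβ1 s
  have hPD1 : ∀ s, ∑ s', PD s s' = 1 := fun s => kernel_rowsum p hp1 πD hπD1 s
  -- existence of the discounted visitation frequency of π
  obtain ⟨ρπ, hρπ⟩ : ∃ ρπ : S → ℝ, ∀ s', ρπ s' = d0 s' + γ * ∑ s, ρπ s * Pπ s s' := by
    let L : (S → ℝ) →ₗ[ℝ] (S → ℝ) :=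
      { toFun := fun ρ s' => ρ s' - γ * ∑ s, ρ s * Pπ s s'
        map_add' := by
          intro x y; funext s'
          have h : ∑ s, (x s + y s) * Pπ s s' = ∑ s, x s * Pπ s s' + ∑ s, y s * Pπ s s' := by
            rw [← Finset.sum_add_distrib]
            apply Finset.sum_congr rfl; intros; ring
          simp only [Pi.add_apply]
          rw [h]; ring
        map_smul' := by
          intro c x; funext s'
          have h : ∑ s, (c * x s) * Pπ s s' = c * ∑ s, x s * Pπ s s' := by
            rw [Finset.mul_sum]
            apply Finset.sum_congr rfl; intros; ring
          simp only [Pi.smul_apply, smul_eq_mul, RingHom.id_apply]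
          rw [h]; ring }
    have hinj : Function.Injective L := by
      refine (injective_iff_map_eq_zero L).mpr ?_
      intro x hx
      have hfix : ∀ s', x s' = (0:ℝ) + γ * ∑ s, x s * Pπ s s' := by
        intro s'
        have h := congrFun hx s'
        simp only [L, LinearMap.coe_mk, AddHom.coe_mk, Pi.zero_apply] at h
        linarith
      have hzero : ∀ s', (0:ℝ) = (0:ℝ) + γ * ∑ s, (0:ℝ) * Pπ s s' := by
        intro s'; simp
      have := rho_shift γ hγ0 hγ1 Pπ Pπ hPπ0 hPπ1 (fun _ => (0:ℝ)) x (fun _ => (0:ℝ))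
        hfix hzero (fun _ => le_refl 0) (fun _ => (0:ℝ)) (fun s => by simp)
      simp only [sub_zero, mul_zero, Finset.sum_const_zero] at this
      funext s
      have h1 : |x s| ≤ ∑ u, |x u| :=
        Finset.single_le_sum (f := fun u => |x u|) (fun u _ => abs_nonneg _) (mem_univ s)
      have h2 : |x s| ≤ 0 := h1.trans this
      have := abs_nonneg (x s)
      simp only [Pi.zero_apply]
      have : |x s| = 0 := le_antisymm h2 (abs_nonneg _)
      exact abs_eq_zero.mp this
    obtain ⟨ρπ, hρπ0⟩ := (LinearMap.injective_iff_surjective).mp hinj d0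
    refine ⟨ρπ, fun s' => ?_⟩
    have h := congrFun hρπ0 s'
    simp only [L, LinearMap.coe_mk, AddHom.coe_mk] at h
    linarith
  -- quantities in the bound
  set 𝔸 := univ.sup' univ_nonempty (fun sa : S × A =>
      |(r sa.1 + γ * ∑ s', p sa.1 sa.2 s' * Vk s') - Vk sa.1|) with h𝔸def
  set ε := univ.sup' univ_nonempty (fun s => (1/2 : ℝ) * ∑ a, |π s a - πk s a|) with hεdef
  set Δ := univ.sup' univ_nonempty (fun s =>
      ∑ s', ρβs s s' * ((1/2 : ℝ) * ∑ a, |πk s' a - πβ s' a|)) with hΔdef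
  have h𝔸0 : 0 ≤ 𝔸 := by
    have h := Finset.le_sup' (fun sa : S × A =>
      |(r sa.1 + γ * ∑ s', p sa.1 sa.2 s' * Vk s') - Vk sa.1|)
      (mem_univ (Classical.arbitrary (S × A)))
    rw [← h𝔸def] at h
    exact (abs_nonneg _).trans h
  have hε0 : 0 ≤ ε := by
    have h := Finset.le_sup' (fun s => (1/2 : ℝ) * ∑ a, |π s a - πk s a|)
      (mem_univ (Classical.arbitrary S))
    rw [← hεdef] at h
    have h2 : 0 ≤ (1/2 : ℝ) * ∑ a, |π (Classical.arbitrary S) a - πk (Classical.arbitrary S) a| := by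
      positivity
    exact h2.trans h
  -- basic facts
  have hVkb : ∀ s, |Vk s| ≤ Rmax / (1 - γ) := value_bound γ hγ0 hγ1 Pk hPk0 hPk1 r Rmax hr Vk hVk
  have hρkp : ∀ s, 0 ≤ ρk s := rho_nonneg γ hγ0 hγ1 Pk hPk0 hPk1 d0 hd00 ρk hρk
  have hρβp : ∀ s, 0 ≤ ρβ s := rho_nonneg γ hγ0 hγ1 Pβ hPβ0 hPβ1 d0 hd00 ρβ hρβ
  have hρDp : ∀ s, 0 ≤ ρD s := rho_nonneg γ hγ0 hγ1 PD hPD0 hPD1 d0 hd00 ρD hρD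
  have hρβsp : ∀ s u, 0 ≤ ρβs s u := fun s =>
    rho_nonneg γ hγ0 hγ1 Pβ hPβ0 hPβ1 (fun u => if u = s then (1:ℝ) else 0)
      (fun u => by by_cases h : u = s <;> simp [h]) (ρβs s) (hρβs s)
  have hρDm : ∑ s, ρD s = 1 / (1 - γ) := by
    have h := rho_mass γ PD hPD1 d0 ρD hρD
    rw [hd01] at h
    field_simp
    linarith
  -- advantage of π_k
  have hAk𝔸 : ∀ s a, |(r s + γ * ∑ s', p s a s' * Vk s') - Vk s| ≤ 𝔸 := by
    intro s a
    have h := Finset.le_sup' (fun sa : S × A =>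
      |(r sa.1 + γ * ∑ s', p sa.1 sa.2 s' * Vk s') - Vk sa.1|) (mem_univ (s, a))
    rw [← h𝔸def] at h
    exact h
  let g : S → ℝ := fun s => r s + γ * ∑ s', Pπ s s' * Vk s' - Vk s
  let gβ : S → ℝ := fun s => r s + γ * ∑ s', Pπ s s' * Vβ s' - Vβ s
  -- performance difference lemma
  have hPDL : ∑ s, d0 s * V s - ∑ s, d0 s * Vk s = ∑ s, ρπ s * g s :=
    pdl γ Pπ Pk r V Vk d0 ρπ hV hVk hρπ
  -- per-state bound on g
  have hgb : ∀ s, |g s| ≤ 2 * ε * 𝔸 := by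
    intro s
    have hπg : ∑ a, π s a * ((r s + γ * ∑ s', p s a s' * Vk s') - Vk s) = g s :=
      policy_avg p π hπ1 γ r Vk s
    have hzero : ∑ a, πk s a * ((r s + γ * ∑ s', p s a s' * Vk s') - Vk s) = 0 := by
      rw [policy_avg p πk hπk1 γ r Vk s]
      have := hVk s
      linarith
    have hgs : g s = ∑ a, (π s a - πk s a) * ((r s + γ * ∑ s', p s a s' * Vk s') - Vk s) := by
      have h : ∑ a, (π s a - πk s a) * ((r s + γ * ∑ s', p s a s' * Vk s') - Vk s)
          = ∑ a, π s a * ((r s + γ * ∑ s', p s a s' * Vk s') - Vk s)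
            - ∑ a, πk s a * ((r s + γ * ∑ s', p s a s' * Vk s') - Vk s) := by
        rw [← Finset.sum_sub_distrib]
        apply Finset.sum_congr rfl; intros; ring
      rw [h, hπg, hzero]; ring
    rw [hgs]
    calc |∑ a, (π s a - πk s a) * ((r s + γ * ∑ s', p s a s' * Vk s') - Vk s)|
        ≤ ∑ a, |π s a - πk s a| * |(r s + γ * ∑ s', p s a s' * Vk s') - Vk s| := by
          refine (Finset.abs_sum_le_sum_abs _ _).trans (le_of_eq ?_)
          apply Finset.sum_congr rfl; intros; rw [abs_mul]
      _ ≤ ∑ a, |π s a - πk s a| * 𝔸 :=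
          Finset.sum_le_sum fun a _ => mul_le_mul_of_nonneg_left (hAk𝔸 s a) (abs_nonneg _)
      _ = (∑ a, |π s a - πk s a|) * 𝔸 := (Finset.sum_mul _ _ _).symm
      _ ≤ (2 * ε) * 𝔸 := by
          apply mul_le_mul_of_nonneg_right _ h𝔸0
          have h := Finset.le_sup' (fun s => (1/2 : ℝ) * ∑ a, |π s a - πk s a|) (mem_univ s)
          rw [← hεdef] at h
          linarith
      _ = 2 * ε * 𝔸 := by ring
  -- visitation shift bounds
  have hSπk : ∑ s, |ρπ s - ρk s| ≤ γ / (1 - γ) * ∑ s, ρk s * ∑ a, |π s a - πk s a| :=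
    rho_shift γ hγ0 hγ1 Pπ Pk hPπ0 hPπ1 d0 ρπ ρk hρπ hρk hρkp
      (fun s => ∑ a, |π s a - πk s a|) (fun s => kernel_l1 p hp0 hp1 π πk s)
  have hSkβ : ∑ s, |ρk s - ρβ s| ≤ γ / (1 - γ) * ∑ s, ρβ s * ∑ a, |πk s a - πβ s a| :=
    rho_shift γ hγ0 hγ1 Pk Pβ hPk0 hPk1 d0 ρk ρβ hρk hρβ hρβp
      (fun s => ∑ a, |πk s a - πβ s a|) (fun s => kernel_l1 p hp0 hp1 πk πβ s)
  have hSβD : ∑ s, |ρβ s - ρD s| ≤ γ / (1 - γ) * ∑ s, ρD s * ∑ a, |πβ s a - πD s a| :=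
    rho_shift γ hγ0 hγ1 Pβ PD hPβ0 hPβ1 d0 ρβ ρD hρβ hρD hρDp
      (fun s => ∑ a, |πβ s a - πD s a|) (fun s => kernel_l1 p hp0 hp1 πβ πD s)
  have eDk : ∑ s, ρk s * ∑ a, |π s a - πk s a|
      = 2 * ∑ s, ρk s * ((1/2 : ℝ) * ∑ a, |π s a - πk s a|) := by
    rw [Finset.mul_sum]; apply Finset.sum_congr rfl; intros; ring
  have eDβ : ∑ s, ρβ s * ∑ a, |πk s a - πβ s a|
      = 2 * ∑ s, ρβ s * ((1/2 : ℝ) * ∑ a, |πk s a - πβ s a|) := by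
    rw [Finset.mul_sum]; apply Finset.sum_congr rfl; intros; ring
  have eDD : ∑ s, ρD s * ∑ a, |πβ s a - πD s a|
      = 2 * ∑ s, ρD s * ((1/2 : ℝ) * ∑ a, |πβ s a - πD s a|) := by
    rw [Finset.mul_sum]; apply Finset.sum_congr rfl; intros; ring
  -- triangle inequality for visitations
  have htri : ∑ s, |ρπ s - ρD s|
      ≤ ∑ s, |ρπ s - ρk s| + ∑ s, |ρk s - ρβ s| + ∑ s, |ρβ s - ρD s| := by
    have h : ∑ s, |ρπ s - ρD s| ≤ ∑ s, (|ρπ s - ρk s| + |ρk s - ρβ s| + |ρβ s - ρD s|) := by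
      apply Finset.sum_le_sum
      intro s _
      have h1 : ρπ s - ρD s = (ρπ s - ρk s) + ((ρk s - ρβ s) + (ρβ s - ρD s)) := by ring
      rw [h1]
      have h2 := abs_add_le (ρπ s - ρk s) ((ρk s - ρβ s) + (ρβ s - ρD s))
      have h3 := abs_add_le (ρk s - ρβ s) (ρβ s - ρD s)
      linarith
    rw [Finset.sum_add_distrib, Finset.sum_add_distrib] at h
    exact h
  -- bound on the shift term
  have h2εA : (0:ℝ) ≤ 2 * ε * 𝔸 := by positivity
  have hshift : |∑ s, ρπ s * g s - ∑ s, ρD s * g s|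
      ≤ (∑ s, |ρπ s - ρD s|) * (2 * ε * 𝔸) := by
    rw [← Finset.sum_sub_distrib]
    calc |∑ s, (ρπ s * g s - ρD s * g s)| ≤ ∑ s, |ρπ s - ρD s| * |g s| := by
          refine (Finset.abs_sum_le_sum_abs _ _).trans (le_of_eq ?_)
          apply Finset.sum_congr rfl; intros s _
          rw [← sub_mul, abs_mul]
      _ ≤ ∑ s, |ρπ s - ρD s| * (2 * ε * 𝔸) :=
          Finset.sum_le_sum fun s _ => mul_le_mul_of_nonneg_left (hgb s) (abs_nonneg _)
      _ = (∑ s, |ρπ s - ρD s|) * (2 * ε * 𝔸) := (Finset.sum_mul _ _ _).symm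
  -- bound |Vk - Vβ| via Δ
  have hq : ∀ u a, |∑ s', p u a s' * Vk s'| ≤ Rmax / (1 - γ) := by
    intro u a
    calc |∑ s', p u a s' * Vk s'| ≤ ∑ s', |p u a s' * Vk s'| := Finset.abs_sum_le_sum_abs _ _
      _ = ∑ s', p u a s' * |Vk s'| := by
          apply Finset.sum_congr rfl; intro s' _
          rw [abs_mul, abs_of_nonneg (hp0 u a s')]
      _ ≤ ∑ s', p u a s' * (Rmax / (1 - γ)) :=
          Finset.sum_le_sum fun s' _ => mul_le_mul_of_nonneg_left (hVkb s') (hp0 u a s')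
      _ = Rmax / (1 - γ) := by rw [← Finset.sum_mul, hp1 u a, one_mul]
  have hinner : ∀ u, |r u + γ * ∑ s', Pβ u s' * Vk s' - Vk u|
      ≤ γ * (Rmax / (1 - γ)) * ∑ a, |πk u a - πβ u a| := by
    intro u
    have h1 : ∑ s', Pβ u s' * Vk s' = ∑ a, πβ u a * ∑ s', p u a s' * Vk s' :=
      (swapl (fun a => πβ u a) (fun a s' => p u a s') Vk).symm
    have h2 : ∑ s', Pk u s' * Vk s' = ∑ a, πk u a * ∑ s', p u a s' * Vk s' :=
      (swapl (fun a => πk u a) (fun a s' => p u a s') Vk).symm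
    have hVku := hVk u
    rw [h2] at hVku
    have heq : r u + γ * ∑ s', Pβ u s' * Vk s' - Vk u
        = γ * ∑ a, (πβ u a - πk u a) * ∑ s', p u a s' * Vk s' := by
      rw [h1, hVku]
      rw [show ∑ a, (πβ u a - πk u a) * ∑ s', p u a s' * Vk s'
          = ∑ a, πβ u a * ∑ s', p u a s' * Vk s'
            - ∑ a, πk u a * ∑ s', p u a s' * Vk s' by
        rw [← Finset.sum_sub_distrib]; apply Finset.sum_congr rfl; intros; ring]
      ring
    rw [heq, abs_mul, abs_of_nonneg hγ0]
    calc γ * |∑ a, (πβ u a - πk u a) * ∑ s', p u a s' * Vk s'|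
        ≤ γ * ∑ a, |πβ u a - πk u a| * (Rmax / (1 - γ)) := by
          apply mul_le_mul_of_nonneg_left _ hγ0
          refine (Finset.abs_sum_le_sum_abs _ _).trans ?_
          apply Finset.sum_le_sum; intro a _
          rw [abs_mul]
          exact mul_le_mul_of_nonneg_left (hq u a) (abs_nonneg _)
      _ = γ * (Rmax / (1 - γ)) * ∑ a, |πk u a - πβ u a| := by
          rw [← Finset.sum_mul]
          rw [show ∑ a, |πβ u a - πk u a| = ∑ a, |πk u a - πβ u a| from
            Finset.sum_congr rfl fun a _ => abs_sub_comm _ _]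
          ring
  have hW : ∀ s, |Vk s - Vβ s| ≤ 2 * γ * Rmax / (1 - γ) * Δ := by
    intro s
    have hpdl := pdl γ Pβ Pk r Vβ Vk (fun u => if u = s then (1:ℝ) else 0) (ρβs s)
      hVβ hVk (hρβs s)
    have hL1 : ∑ u, (if u = s then (1:ℝ) else 0) * Vβ u = Vβ s := by simp
    have hL2 : ∑ u, (if u = s then (1:ℝ) else 0) * Vk u = Vk s := by simp
    rw [hL1, hL2] at hpdl
    have habs : |Vβ s - Vk s|
        ≤ ∑ u, ρβs s u * (γ * (Rmax / (1 - γ)) * ∑ a, |πk u a - πβ u a|) := by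
      rw [hpdl]
      refine (Finset.abs_sum_le_sum_abs _ _).trans ?_
      apply Finset.sum_le_sum; intro u _
      rw [abs_mul, abs_of_nonneg (hρβsp s u)]
      exact mul_le_mul_of_nonneg_left (hinner u) (hρβsp s u)
    have heq2 : ∑ u, ρβs s u * (γ * (Rmax / (1 - γ)) * ∑ a, |πk u a - πβ u a|)
        = (2 * γ * Rmax / (1 - γ)) * ∑ u, ρβs s u * ((1/2 : ℝ) * ∑ a, |πk u a - πβ u a|) := by
      rw [Finset.mul_sum]; apply Finset.sum_congr rfl; intros; field_simp
    have hΔs : ∑ u, ρβs s u * ((1/2 : ℝ) * ∑ a, |πk u a - πβ u a|) ≤ Δ := by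
      have h := Finset.le_sup' (fun s => ∑ s', ρβs s s' * ((1/2 : ℝ) * ∑ a, |πk s' a - πβ s' a|))
        (mem_univ s)
      rw [← hΔdef] at h
      exact h
    have hcoef : (0:ℝ) ≤ 2 * γ * Rmax / (1 - γ) := by positivity
    rw [abs_sub_comm]
    calc |Vβ s - Vk s| ≤ _ := habs
      _ = (2 * γ * Rmax / (1 - γ)) * ∑ u, ρβs s u * ((1/2 : ℝ) * ∑ a, |πk u a - πβ u a|) := heq2
      _ ≤ (2 * γ * Rmax / (1 - γ)) * Δ := mul_le_mul_of_nonneg_left hΔs hcoef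
  have hΔ0 : 0 ≤ Δ := by
    have h := Finset.le_sup' (fun s => ∑ s', ρβs s s' * ((1/2 : ℝ) * ∑ a, |πk s' a - πβ s' a|))
      (mem_univ (Classical.arbitrary S))
    rw [← hΔdef] at h
    refine le_trans ?_ h
    apply Finset.sum_nonneg; intro u _
    have h2 : (0:ℝ) ≤ (1/2 : ℝ) * ∑ a, |πk u a - πβ u a| := by positivity
    exact mul_nonneg (hρβsp _ u) h2
  -- bound the advantage replacement error
  have hgd : ∀ s, |g s - gβ s| ≤ (1 + γ) * (2 * γ * Rmax / (1 - γ) * Δ) := by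
    intro s
    have heq : g s - gβ s = γ * ∑ s', Pπ s s' * (Vk s' - Vβ s') - (Vk s - Vβ s) := by
      have h : ∑ s', Pπ s s' * (Vk s' - Vβ s')
          = ∑ s', Pπ s s' * Vk s' - ∑ s', Pπ s s' * Vβ s' := by
        rw [← Finset.sum_sub_distrib]; apply Finset.sum_congr rfl; intros; ring
      rw [h]
      show (r s + γ * ∑ s', Pπ s s' * Vk s' - Vk s)
        - (r s + γ * ∑ s', Pπ s s' * Vβ s' - Vβ s) = _
      ring
    have hPW : |∑ s', Pπ s s' * (Vk s' - Vβ s')| ≤ 2 * γ * Rmax / (1 - γ) * Δ := by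
      calc |∑ s', Pπ s s' * (Vk s' - Vβ s')| ≤ ∑ s', |Pπ s s' * (Vk s' - Vβ s')| :=
            Finset.abs_sum_le_sum_abs _ _
        _ = ∑ s', Pπ s s' * |Vk s' - Vβ s'| := by
            apply Finset.sum_congr rfl; intro s' _
            rw [abs_mul, abs_of_nonneg (hPπ0 s s')]
        _ ≤ ∑ s', Pπ s s' * (2 * γ * Rmax / (1 - γ) * Δ) :=
            Finset.sum_le_sum fun s' _ => mul_le_mul_of_nonneg_left (hW s') (hPπ0 s s')
        _ = 2 * γ * Rmax / (1 - γ) * Δ := by rw [← Finset.sum_mul, hPπ1 s, one_mul]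
    rw [heq]
    have h1 := abs_sub (γ * ∑ s', Pπ s s' * (Vk s' - Vβ s')) (Vk s - Vβ s)
    have h2 : |γ * ∑ s', Pπ s s' * (Vk s' - Vβ s')| ≤ γ * (2 * γ * Rmax / (1 - γ) * Δ) := by
      rw [abs_mul, abs_of_nonneg hγ0]
      exact mul_le_mul_of_nonneg_left hPW hγ0
    have h3 := hW s
    calc |γ * ∑ s', Pπ s s' * (Vk s' - Vβ s') - (Vk s - Vβ s)|
        ≤ |γ * ∑ s', Pπ s s' * (Vk s' - Vβ s')| + |Vk s - Vβ s| := abs_sub _ _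
      _ ≤ (1 + γ) * (2 * γ * Rmax / (1 - γ) * Δ) := by linarith
  have hE : |∑ s, ρD s * g s - ∑ s, ρD s * gβ s|
      ≤ (∑ s, ρD s) * ((1 + γ) * (2 * γ * Rmax / (1 - γ) * Δ)) := by
    rw [← Finset.sum_sub_distrib]
    calc |∑ s, (ρD s * g s - ρD s * gβ s)| ≤ ∑ s, ρD s * |g s - gβ s| := by
          refine (Finset.abs_sum_le_sum_abs _ _).trans (le_of_eq ?_)
          apply Finset.sum_congr rfl; intros s _
          rw [← mul_sub, abs_mul, abs_of_nonneg (hρDp s)]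
      _ ≤ ∑ s, ρD s * ((1 + γ) * (2 * γ * Rmax / (1 - γ) * Δ)) :=
          Finset.sum_le_sum fun s _ => mul_le_mul_of_nonneg_left (hgd s) (hρDp s)
      _ = (∑ s, ρD s) * ((1 + γ) * (2 * γ * Rmax / (1 - γ) * Δ)) := (Finset.sum_mul _ _ _).symm
  -- rewrite the first term of the bound
  have hT1 : (∑ s, ρD s * ∑ a, π s a * ((r s + γ * ∑ s', p s a s' * Vβ s') - Vβ s))
      = ∑ s, ρD s * gβ s := by
    apply Finset.sum_congr rfl; intro s _
    congr 1
    exact policy_avg p π hπ1 γ r Vβ s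
  rw [hT1]
  -- assemble
  have hS : ∑ s, |ρπ s - ρD s| ≤ γ / (1 - γ) *
      (2 * ∑ s, ρk s * ((1/2 : ℝ) * ∑ a, |π s a - πk s a|)
        + 2 * ∑ s, ρβ s * ((1/2 : ℝ) * ∑ a, |πk s a - πβ s a|)
        + 2 * ∑ s, ρD s * ((1/2 : ℝ) * ∑ a, |πβ s a - πD s a|)) := by
    rw [eDk] at hSπk
    rw [eDβ] at hSkβ
    rw [eDD] at hSβD
    have := htri
    rw [mul_add, mul_add]
    linarith
  have hXYabs : |∑ s, ρπ s * g s - ∑ s, ρD s * g s|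
      ≤ (γ / (1 - γ) *
        (2 * ∑ s, ρk s * ((1/2 : ℝ) * ∑ a, |π s a - πk s a|)
          + 2 * ∑ s, ρβ s * ((1/2 : ℝ) * ∑ a, |πk s a - πβ s a|)
          + 2 * ∑ s, ρD s * ((1/2 : ℝ) * ∑ a, |πβ s a - πD s a|))) * (2 * ε * 𝔸) :=
    hshift.trans (mul_le_mul_of_nonneg_right hS h2εA)
  have heqXY : (γ / (1 - γ) *
        (2 * ∑ s, ρk s * ((1/2 : ℝ) * ∑ a, |π s a - πk s a|)
          + 2 * ∑ s, ρβ s * ((1/2 : ℝ) * ∑ a, |πk s a - πβ s a|)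
          + 2 * ∑ s, ρD s * ((1/2 : ℝ) * ∑ a, |πβ s a - πD s a|))) * (2 * ε * 𝔸)
      = (4 * γ / (1 - γ)) * 𝔸 * ε *
        ((∑ s, ρk s * ((1/2 : ℝ) * ∑ a, |π s a - πk s a|))
          + (∑ s, ρβ s * ((1/2 : ℝ) * ∑ a, |πk s a - πβ s a|))
          + (∑ s, ρD s * ((1/2 : ℝ) * ∑ a, |πβ s a - πD s a|))) := by
    field_simp
    ring
  have heqE : (∑ s, ρD s) * ((1 + γ) * (2 * γ * Rmax / (1 - γ) * Δ))
      = (2 * γ * (γ + 1) / (1 - γ) ^ 2) * Rmax * Δ := by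
    rw [hρDm]
    field_simp
    ring
  rw [heqXY] at hXYabs
  rw [heqE] at hE
  have hXY := neg_abs_le (∑ s, ρπ s * g s - ∑ s, ρD s * g s)
  have hYT := neg_abs_le (∑ s, ρD s * g s - ∑ s, ρD s * gβ s)
  linarith [hPDL, hXYabs, hE, hXY, hYT]
end
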